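/- arXiv:1704.01929 — 5 statements merged into one kernel-verified Lean document; each statement's English description precedes it below -/
import Mathlib

section
/- Let E = {1, 2, ..., m} be a finite universe and let M ⊆ 2^E be any nonempty family of subsets of E. Suppose a weight function w : E → {1, 2, ..., 2m} is chosen by selecting each value w(e), e ∈ E, independently and uniformly at random. Then with probability at least 1/2 there is a unique set M₀ ∈ M minimizing the weight w(M₀) = Σ_{e ∈ M₀} w(e). -/
open scoped BigOperators
open scoped Classical

/-- weight of a set -/
def isoWt {m : ℕ} (w : Fin m → Fin (2 * m)) (M : Finset (Fin m)) : ℕ :=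
  ∑ e ∈ M, ((w e : ℕ) + 1)

/-- `e` is ambiguous for `w`: there are two minimizers, one containing `e`, one not. -/
def isoAmb {m : ℕ} (ℳ : Finset (Finset (Fin m))) (e : Fin m)
    (w : Fin m → Fin (2 * m)) : Prop :=
  ∃ M₁ ∈ ℳ, ∃ M₂ ∈ ℳ, e ∈ M₁ ∧ e ∉ M₂ ∧
    (∀ M ∈ ℳ, isoWt w M₁ ≤ isoWt w M) ∧ (∀ M ∈ ℳ, isoWt w M₂ ≤ isoWt w M)

lemma isoWt_eq_of_notMem {m : ℕ} {w w' : Fin m → Fin (2 * m)} {e : Fin m}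
    (hoff : ∀ i, i ≠ e → w i = w' i) {M : Finset (Fin m)} (he : e ∉ M) :
    isoWt w M = isoWt w' M := by
  unfold isoWt
  refine Finset.sum_congr rfl fun i hi => ?_
  have : i ≠ e := fun h => he (h ▸ hi)
  rw [hoff i this]

lemma isoWt_split {m : ℕ} (w : Fin m → Fin (2 * m)) {M : Finset (Fin m)} {e : Fin m}
    (he : e ∈ M) : isoWt w M = isoWt w (M.erase e) + ((w e : ℕ) + 1) := by
  unfold isoWt
  rw [Finset.sum_erase_add _ _ he]

/-- Key step: two ambiguous weight functions agreeing off `e` agree at `e`. -/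
lemma isoAmb_eq_at {m : ℕ} {ℳ : Finset (Finset (Fin m))} {e : Fin m}
    {w w' : Fin m → Fin (2 * m)} (hoff : ∀ i, i ≠ e → w i = w' i)
    (h : isoAmb ℳ e w) (h' : isoAmb ℳ e w') : w e = w' e := by
  obtain ⟨M₁, hM₁, M₂, hM₂, he₁, he₂, hmin₁, hmin₂⟩ := h
  obtain ⟨M₁', hM₁', M₂', hM₂', he₁', he₂', hmin₁', hmin₂'⟩ := h'
  -- sums over erased sets agree for w and w'
  have hs1 : isoWt w (M₁.erase e) = isoWt w' (M₁.erase e) :=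
    isoWt_eq_of_notMem hoff (Finset.notMem_erase e M₁)
  have hs1' : isoWt w (M₁'.erase e) = isoWt w' (M₁'.erase e) :=
    isoWt_eq_of_notMem hoff (Finset.notMem_erase e M₁')
  have ht2 : isoWt w M₂ = isoWt w' M₂ := isoWt_eq_of_notMem hoff he₂
  have ht2' : isoWt w M₂' = isoWt w' M₂' := isoWt_eq_of_notMem hoff he₂'
  set a := (w e : ℕ) + 1 with ha
  set b := (w' e : ℕ) + 1 with hb
  have sp1 : isoWt w M₁ = isoWt w (M₁.erase e) + a := isoWt_split w he₁
  have sp1' : isoWt w M₁' = isoWt w (M₁'.erase e) + a := isoWt_split w he₁'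
  have sp1w' : isoWt w' M₁ = isoWt w' (M₁.erase e) + b := isoWt_split w' he₁
  have sp1'w' : isoWt w' M₁' = isoWt w' (M₁'.erase e) + b := isoWt_split w' he₁'
  -- s1 = s1'
  have h1 : isoWt w (M₁.erase e) ≤ isoWt w (M₁'.erase e) := by
    have := hmin₁ M₁' hM₁'
    rw [sp1, sp1'] at this
    omega
  have h2 : isoWt w' (M₁'.erase e) ≤ isoWt w' (M₁.erase e) := by
    have := hmin₁' M₁ hM₁
    rw [sp1w', sp1'w'] at this
    omega
  -- t2 = t2'
  have h3 : isoWt w M₂ ≤ isoWt w M₂' := hmin₂ M₂' hM₂'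
  have h4 : isoWt w' M₂' ≤ isoWt w' M₂ := hmin₂' M₂ hM₂
  -- s1 + a = t2
  have h5 : isoWt w M₁ = isoWt w M₂ :=
    le_antisymm (hmin₁ M₂ hM₂) (hmin₂ M₁ hM₁)
  have h6 : isoWt w' M₁' = isoWt w' M₂' :=
    le_antisymm (hmin₁' M₂' hM₂') (hmin₂' M₁' hM₁')
  have hab : a = b := by omega
  have : (w e : ℕ) = (w' e : ℕ) := by omega
  exact Fin.ext this

/-- **Isolation Lemma** (Mulmuley–Vazirani–Vazirani).
Let `E = {1, …, m}` and let `ℳ` be a nonempty family of subsets of `E`.  If a weight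
function `w : E → {1, …, 2m}` is chosen uniformly at random (modelled here by counting:
the weight of `e` is `(w e : ℕ) + 1` for `w : Fin m → Fin (2*m)`), then with probability
at least `1/2` there is a unique set `M₀ ∈ ℳ` minimizing `w(M₀) = Σ_{e ∈ M₀} w(e)`,
i.e. a set `M₀ ∈ ℳ` with `w(M₀) < w(M)` for every `M ∈ ℳ` with `M ≠ M₀`. -/
theorem isolation_lemma (m : ℕ) (ℳ : Finset (Finset (Fin m))) (hℳ : ℳ.Nonempty) :
    Fintype.card (Fin m → Fin (2 * m)) ≤
      2 * (Finset.univ.filter (fun w : Fin m → Fin (2 * m) =>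
            ∃ M₀ ∈ ℳ, ∀ M ∈ ℳ, M ≠ M₀ →
              (∑ e ∈ M₀, ((w e : ℕ) + 1)) < ∑ e ∈ M, ((w e : ℕ) + 1))).card := by
  classical
  rcases Nat.eq_zero_or_pos m with hm | hm
  · -- m = 0 : the unique weight function is good
    subst hm
    obtain ⟨M₀, hM₀⟩ := hℳ
    have hgood : ∀ w : Fin 0 → Fin (2 * 0),
        ∃ M₀' ∈ ℳ, ∀ M ∈ ℳ, M ≠ M₀' →
          (∑ e ∈ M₀', ((w e : ℕ) + 1)) < ∑ e ∈ M, ((w e : ℕ) + 1) := by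
      intro w
      refine ⟨M₀, hM₀, fun M hM hne => ?_⟩
      exact absurd (Subsingleton.elim M M₀) hne
    have : (Finset.univ.filter (fun w : Fin 0 → Fin (2 * 0) =>
        ∃ M₀ ∈ ℳ, ∀ M ∈ ℳ, M ≠ M₀ →
          (∑ e ∈ M₀, ((w e : ℕ) + 1)) < ∑ e ∈ M, ((w e : ℕ) + 1))) = Finset.univ := by
      refine Finset.filter_true_of_mem fun w _ => hgood w
    rw [this]
    simp
  -- main case m > 0
  set N := Fintype.card (Fin m → Fin (2 * m)) with hN
  set good : (Fin m → Fin (2 * m)) → Prop := fun w =>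
    ∃ M₀ ∈ ℳ, ∀ M ∈ ℳ, M ≠ M₀ →
      (∑ e ∈ M₀, ((w e : ℕ) + 1)) < ∑ e ∈ M, ((w e : ℕ) + 1) with hgood
  set G := Finset.univ.filter good with hG
  set B := Finset.univ.filter (fun w => ¬ good w) with hB
  have hGB : G.card + B.card = N := by
    rw [hG, hB, Finset.card_filter_add_card_filter_not]
    simp [hN]
  -- every bad w has an ambiguous element
  have hbad_amb : ∀ w ∈ B, ∃ e : Fin m, isoAmb ℳ e w := by
    intro w hw
    rw [hB, Finset.mem_filter] at hw
    obtain ⟨-, hng⟩ := hw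
    obtain ⟨M₀, hM₀, hmin⟩ := Finset.exists_min_image ℳ (isoWt w) hℳ
    simp only [hgood] at hng
    push_neg at hng
    obtain ⟨M, hM, hne, hle⟩ := hng M₀ hM₀
    -- here hne : M ≠ M₀, hle : wt M ≤ wt M₀  (from ¬ <)
    have hMmin : ∀ M' ∈ ℳ, isoWt w M ≤ isoWt w M' := by
      intro M' hM'
      exact le_trans hle (hmin M' hM')
    have : ¬ (M ⊆ M₀) ∨ ¬ (M₀ ⊆ M) := by
      by_contra hc
      push_neg at hc
      exact hne (Finset.Subset.antisymm hc.1 hc.2)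
    rcases this with hns | hns
    · obtain ⟨e, heM, heM₀⟩ := Finset.not_subset.mp hns
      exact ⟨e, M, hM, M₀, hM₀, heM, heM₀, hMmin, hmin⟩
    · obtain ⟨e, heM₀, heM⟩ := Finset.not_subset.mp hns
      exact ⟨e, M₀, hM₀, M, hM, heM₀, heM, hmin, hMmin⟩
  -- bound the ambiguous sets
  have hAmb_card : ∀ e : Fin m,
      2 * m * (Finset.univ.filter (isoAmb ℳ e)).card ≤ N := by
    intro e
    set A := Finset.univ.filter (isoAmb ℳ e) with hA
    have key : (A ×ˢ (Finset.univ : Finset (Fin (2 * m)))).card ≤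
        (Finset.univ : Finset (Fin m → Fin (2 * m))).card := by
      apply Finset.card_le_card_of_injOn
        (fun p => Function.update p.1 e p.2)
      · intro p _; exact Finset.mem_univ _
      · intro p hp q hq hpq
        rw [Finset.mem_coe, Finset.mem_product] at hp hq
        have hpA := (Finset.mem_filter.mp hp.1).2
        have hqA := (Finset.mem_filter.mp hq.1).2
        have h2 : p.2 = q.2 := by
          have := congrFun hpq e
          simp only at this
          simpa using this
        have hoff : ∀ i, i ≠ e → p.1 i = q.1 i := by
          intro i hi
          have := congrFun hpq i
          simp only at this
          rwa [Function.update_of_ne hi, Function.update_of_ne hi] at this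
        have h1 : p.1 e = q.1 e := isoAmb_eq_at hoff hpA hqA
        have : p.1 = q.1 := funext fun i => by
          by_cases hie : i = e
          · subst hie; exact h1
          · exact hoff i hie
        exact Prod.ext this h2
    rw [Finset.card_product] at key
    simp only [Finset.card_univ, Fintype.card_fin] at key
    calc 2 * m * A.card = A.card * (2 * m) := by ring
    _ ≤ Fintype.card (Fin m → Fin (2 * m)) := key
    _ = N := rfl
  -- B ⊆ union of ambiguous sets
  have hBsub : B ⊆ Finset.univ.biUnion
      (fun e : Fin m => Finset.univ.filter (isoAmb ℳ e)) := by
    intro w hw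
    obtain ⟨e, he⟩ := hbad_amb w hw
    exact Finset.mem_biUnion.mpr ⟨e, Finset.mem_univ e,
      Finset.mem_filter.mpr ⟨Finset.mem_univ w, he⟩⟩
  have hBcard : B.card ≤ ∑ e : Fin m, (Finset.univ.filter (isoAmb ℳ e)).card :=
    le_trans (Finset.card_le_card hBsub) (Finset.card_biUnion_le)
  have h2m : 2 * m * B.card ≤ m * N := by
    calc 2 * m * B.card ≤ 2 * m * ∑ e : Fin m, (Finset.univ.filter (isoAmb ℳ e)).card :=
          Nat.mul_le_mul_left _ hBcard
    _ = ∑ e : Fin m, 2 * m * (Finset.univ.filter (isoAmb ℳ e)).card := by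
          rw [Finset.mul_sum]
    _ ≤ ∑ _e : Fin m, N := Finset.sum_le_sum fun e _ => hAmb_card e
    _ = m * N := by simp [Finset.sum_const, Finset.card_univ]
  have h2B : 2 * B.card ≤ N := by
    have := h2m
    nlinarith [hm]
  -- conclude
  have : N ≤ 2 * G.card := by omega
  exact this
end

section
/- For any number s ≥ 1 with n³s ≥ 7 and any vectors y_1, ..., y_s ∈ ℤ^E \ {0} satisfying ‖y_i‖₁ ≤ 4n² for each i, there exists a weight function w ∈ W(n³s) such that ⟨y_i, w⟩ ≠ 0 for every i = 1, ..., s. -/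
/- Formalization framework for "The Matching Problem in General Graphs is in Quasi-NC"
(Svensson–Tarnawski).  The graph has vertex set `Fin n`; vectors indexed by edges are
modelled as functions `Sym2 (Fin n) → ℝ` (resp. `ℤ`) supported on the edge set. -/

open scoped BigOperators
open scoped Classical

noncomputable section

namespace PMQuasiNC

/-- The dot product `⟨w, x⟩` of two real vectors indexed by (potential) edges. -/
def dotR {n : ℕ} (w x : Sym2 (Fin n) → ℝ) : ℝ := ∑ e : Sym2 (Fin n), w e * x e

/-- The dot product of two integer vectors indexed by (potential) edges. -/
def dotZ {n : ℕ} (y w : Sym2 (Fin n) → ℤ) : ℤ := ∑ e : Sym2 (Fin n), y e * w e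

/-- The ℓ¹ norm `‖y‖₁` of an integer vector. -/
def l1norm {n : ℕ} (y : Sym2 (Fin n) → ℤ) : ℤ := ∑ e : Sym2 (Fin n), |y e|

/-- The support of an integer vector. -/
def suppZ {n : ℕ} (y : Sym2 (Fin n) → ℤ) : Set (Sym2 (Fin n)) := {e | y e ≠ 0}

/-- `δ(S)`: the set of edges of `G` with exactly one endpoint in `S`. -/
def cut {n : ℕ} (G : SimpleGraph (Fin n)) (S : Finset (Fin n)) : Set (Sym2 (Fin n)) :=
  {e | e ∈ G.edgeSet ∧ ∃ u v, e = s(u, v) ∧ u ∈ S ∧ v ∉ S}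

/-- `E(S)`: the set of edges of `G` with both endpoints in `S`. -/
def insideEdges {n : ℕ} (G : SimpleGraph (Fin n)) (S : Finset (Fin n)) :
    Set (Sym2 (Fin n)) :=
  {e | e ∈ G.edgeSet ∧ ∀ v ∈ e, v ∈ S}

/-- The indicator vector `1_{δ(S)}` of the cut `δ(S)`. -/
def cutInd {n : ℕ} (G : SimpleGraph (Fin n)) (S : Finset (Fin n)) : Sym2 (Fin n) → ℝ :=
  fun e => if e ∈ cut G S then 1 else 0

/-- `⟨y, 1_{δ(S)}⟩ = Σ_{e ∈ δ(S)} y_e` for an integer vector `y`. -/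
def cutSumZ {n : ℕ} (G : SimpleGraph (Fin n)) (S : Finset (Fin n))
    (y : Sym2 (Fin n) → ℤ) : ℤ :=
  ∑ e : Sym2 (Fin n), if e ∈ cut G S then y e else 0

/-- A perfect matching of `G`: a set of edges of `G` such that every vertex lies in
exactly one of them. -/
def IsPerfectMatching {n : ℕ} (G : SimpleGraph (Fin n)) (M : Set (Sym2 (Fin n))) : Prop :=
  M ⊆ G.edgeSet ∧ ∀ v : Fin n, ∃! e, e ∈ M ∧ v ∈ e

/-- The indicator vector of a set of edges. -/
def indic {n : ℕ} (M : Set (Sym2 (Fin n))) : Sym2 (Fin n) → ℝ :=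
  fun e => if e ∈ M then 1 else 0

/-- The perfect matching polytope: the convex hull of the indicator vectors of all
perfect matchings of `G`. -/
def PMpoly {n : ℕ} (G : SimpleGraph (Fin n)) : Set (Sym2 (Fin n) → ℝ) :=
  convexHull ℝ {x | ∃ M, IsPerfectMatching G M ∧ x = indic M}

/-- `F[w] = argmin {⟨w,x⟩ : x ∈ F}` for a real weight function `w`. -/
def faceMinR {n : ℕ} (F : Set (Sym2 (Fin n) → ℝ)) (w : Sym2 (Fin n) → ℝ) :
    Set (Sym2 (Fin n) → ℝ) :=
  {x ∈ F | ∀ y ∈ F, dotR w x ≤ dotR w y}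

/-- `F[w] = argmin {⟨w,x⟩ : x ∈ F}` for an integer weight function `w`. -/
def faceMin {n : ℕ} (F : Set (Sym2 (Fin n) → ℝ)) (w : Sym2 (Fin n) → ℤ) :
    Set (Sym2 (Fin n) → ℝ) :=
  faceMinR F (fun e => (w e : ℝ))

/-- A face of the perfect matching polytope: a nonempty subset of the form
`argmin {⟨w,x⟩ : x ∈ PM}` for some linear functional `w` (this includes `PM` itself,
via `w = 0`). -/
def IsFace {n : ℕ} (G : SimpleGraph (Fin n)) (F : Set (Sym2 (Fin n) → ℝ)) : Prop :=
  F.Nonempty ∧ ∃ w : Sym2 (Fin n) → ℝ, F = faceMinR (PMpoly G) w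

/-- `supp(F) = {e : ∃ x ∈ F, x_e > 0}`. -/
def faceSupp {n : ℕ} (F : Set (Sym2 (Fin n) → ℝ)) : Set (Sym2 (Fin n)) :=
  {e | ∃ x ∈ F, 0 < x e}

/-- `tight(F)`: the vertex sets `S` of odd cardinality with `x(δ(S)) = 1` for all
`x ∈ F`. -/
def tightSets {n : ℕ} (G : SimpleGraph (Fin n)) (F : Set (Sym2 (Fin n) → ℝ)) :
    Set (Finset (Fin n)) :=
  {S | Odd S.card ∧ ∀ x ∈ F, dotR (cutInd G S) x = 1}

/-- An integer vector `y` respects a face `F` if `supp(y) ⊆ supp(F)` and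
`⟨y, 1_{δ(S)}⟩ = 0` for every `S ∈ tight(F)`. -/
def RespectsFace {n : ℕ} (G : SimpleGraph (Fin n)) (y : Sym2 (Fin n) → ℤ)
    (F : Set (Sym2 (Fin n) → ℝ)) : Prop :=
  suppZ y ⊆ faceSupp F ∧ ∀ S ∈ tightSets G F, cutSumZ G S y = 0

/-- `S` is `F`-contractible: for every `e ∈ δ(S)` there are no two perfect matchings
in `F` that both contain `e` and differ on `E(S)`. -/
def Contractible {n : ℕ} (G : SimpleGraph (Fin n)) (F : Set (Sym2 (Fin n) → ℝ))
    (S : Finset (Fin n)) : Prop :=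
  ∀ e ∈ cut G S, ∀ M₁ M₂ : Set (Sym2 (Fin n)),
    IsPerfectMatching G M₁ → IsPerfectMatching G M₂ →
    indic M₁ ∈ F → indic M₂ ∈ F → e ∈ M₁ → e ∈ M₂ →
    M₁ ∩ insideEdges G S = M₂ ∩ insideEdges G S

/-- Two vertex sets cross if `S∩T`, `S\T`, `T\S` are all nonempty. -/
def Crossing {n : ℕ} (S T : Finset (Fin n)) : Prop :=
  (S ∩ T).Nonempty ∧ (S \ T).Nonempty ∧ (T \ S).Nonempty

/-- A family of vertex sets is laminar if no two of its members cross. -/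
def Laminar {n : ℕ} (L : Set (Finset (Fin n))) : Prop :=
  ∀ S ∈ L, ∀ T ∈ L, ¬ Crossing S T

/-- `L` is a maximal laminar subfamily of `S`: `L ⊆ S` is laminar and no set of
`S \ L` can be added to `L` while keeping it laminar. -/
def MaxLaminarIn {n : ℕ} (L S : Set (Finset (Fin n))) : Prop :=
  L ⊆ S ∧ Laminar L ∧ ∀ T ∈ S, T ∉ L → ¬ Laminar (insert T L)

/-- The vertices of the `(F, L, λ)`-contraction: the maximal sets of `L` of
cardinality at most `lam`. -/
def contrVerts {n : ℕ} (L : Set (Finset (Fin n))) (lam : ℕ) : Set (Finset (Fin n)) :=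
  {S | S ∈ L ∧ S.card ≤ lam ∧ ∀ T ∈ L, T.card ≤ lam → S ⊆ T → S = T}

/-- The edges of the `(F, L, λ)`-contraction of `G`, identified with their preimages
in `G`: edges of `supp(F)` that do not cross the boundary `δ(T)` of any `T ∈ L` with
`|T| > λ` and do not lie inside a contracted set. -/
def contrEdges {n : ℕ} (G : SimpleGraph (Fin n)) (F : Set (Sym2 (Fin n) → ℝ))
    (L : Set (Finset (Fin n))) (lam : ℕ) : Set (Sym2 (Fin n)) :=
  {e | e ∈ faceSupp F ∧ (∀ T ∈ L, lam < T.card → e ∉ cut G T) ∧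
       ∀ S ∈ contrVerts L lam, ¬ (∀ v ∈ e, v ∈ S)}

/-- Two vertices of `G` map to the same vertex of the `(F, L, λ)`-contraction. -/
def sameClass {n : ℕ} (L : Set (Finset (Fin n))) (lam : ℕ) (u v : Fin n) : Prop :=
  u = v ∨ ∃ S ∈ contrVerts L lam, u ∈ S ∧ v ∈ S

/-- The node-weight of (the contraction vertex of) a vertex `v`: the cardinality of the
contracted set containing `v` (and `1` if `v` is not contained in any contracted set). -/
def classWeight {n : ℕ} (L : Set (Finset (Fin n))) (lam : ℕ) (v : Fin n) : ℕ :=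
  max 1 (sSup {m : ℕ | ∃ S ∈ contrVerts L lam, v ∈ S ∧ S.card = m})

/-- The alternating indicator vector `χ̃_C = Σ_i (-1)^i 1_{e_i}` of a closed walk of
length `k` given by its oriented edges `C 0, …, C (k-1)` (edges of the contraction are
identified with their preimages in `G`). -/
def altInd {n : ℕ} (k : ℕ) (C : ℕ → Fin n × Fin n) : Sym2 (Fin n) → ℤ :=
  fun e => ∑ i ∈ Finset.range k, if s((C i).1, (C i).2) = e then (-1 : ℤ) ^ i else 0

/-- `C 0, …, C (k-1)` is an alternating circuit in the `(F, L, lam)`-contraction of `G`: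
a nonempty closed walk of even length whose alternating indicator vector is nonzero. -/
def IsAltCircuit {n : ℕ} (G : SimpleGraph (Fin n)) (F : Set (Sym2 (Fin n) → ℝ))
    (L : Set (Finset (Fin n))) (lam : ℕ) (k : ℕ) (C : ℕ → Fin n × Fin n) : Prop :=
  0 < k ∧ Even k ∧
  (∀ i < k, s((C i).1, (C i).2) ∈ contrEdges G F L lam) ∧
  (∀ i < k, sameClass L lam (C i).2 (C ((i + 1) % k)).1) ∧
  altInd k C ≠ 0

/-- The node-weight of a closed walk in the contraction: the sum of the node-weights of
the visited vertices, with multiplicity. -/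
def circuitWeight {n : ℕ} (L : Set (Finset (Fin n))) (lam : ℕ) (k : ℕ)
    (C : ℕ → Fin n × Fin n) : ℕ :=
  ∑ i ∈ Finset.range k, classWeight L lam (C i).1

/-- The `(F, L, lam)`-contraction of `G` has no alternating circuit of node-weight at
most `bound`. -/
def NoAltCircuit {n : ℕ} (G : SimpleGraph (Fin n)) (F : Set (Sym2 (Fin n) → ℝ))
    (L : Set (Finset (Fin n))) (lam bound : ℕ) : Prop :=
  ∀ k, ∀ C : ℕ → Fin n × Fin n,
    IsAltCircuit G F L lam k C → circuitWeight L lam k C ≤ bound → False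

/-- `S` is a union of vertex sets of the `(F, L, lam)`-contraction. -/
def IsUnionOfVerts {n : ℕ} (L : Set (Finset (Fin n))) (lam : ℕ)
    (S : Finset (Fin n)) : Prop :=
  ∃ A : Set (Finset (Fin n)), A ⊆ contrVerts L lam ∧
    (S : Set (Fin n)) = ⋃ T ∈ A, (T : Set (Fin n))

/-- A vector `z` on the edges of the `(F, L, lam)`-contraction `H` (identified with a
vector in `ℤ^E` via preimages) respects a subface `F'` if `supp(z) ⊆ supp(F')` and
`⟨z, 1_{δ(S)}⟩ = 0` for every `S ∈ tight(F')` that is a union of vertex sets of `H`. -/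
def RespectsContr {n : ℕ} (G : SimpleGraph (Fin n)) (L : Set (Finset (Fin n)))
    (lam : ℕ) (z : Sym2 (Fin n) → ℤ) (F' : Set (Sym2 (Fin n) → ℝ)) : Prop :=
  suppZ z ⊆ faceSupp F' ∧
  ∀ S ∈ tightSets G F', IsUnionOfVerts L lam S → cutSumZ G S z = 0

/-- The face-laminar pair `(F, L)` is `lam`-good: `L` is a maximal laminar subset of
`tight(F)`, every `S ∈ L` with `|S| ≤ lam` is `F`-contractible, and the
`(F, L, lam)`-contraction of `G` has no alternating circuit of node-weight at most
`lam`. -/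
def LambdaGood {n : ℕ} (G : SimpleGraph (Fin n)) (F : Set (Sym2 (Fin n) → ℝ))
    (L : Set (Finset (Fin n))) (lam : ℕ) : Prop :=
  MaxLaminarIn L (tightSets G F) ∧
  (∀ S ∈ L, S.card ≤ lam → Contractible G F S) ∧
  NoAltCircuit G F L lam lam

/-- The family of weight functions `W(t)`, relative to a fixed enumeration `idx` of the
edges: `w_k(e_j) = (4n²+1)^j mod k` for `k = 2, …, t`. -/
def Wfam (n : ℕ) (idx : Sym2 (Fin n) → ℕ) (t : ℕ) : Set (Sym2 (Fin n) → ℤ) :=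
  {w | ∃ k : ℕ, 2 ≤ k ∧ k ≤ t ∧ w = fun e => ((4 * (n : ℤ) ^ 2 + 1) ^ (idx e)) % (k : ℤ)}

/-- `W = W(n^20)`. -/
def Wbig (n : ℕ) (idx : Sym2 (Fin n) → ℕ) : Set (Sym2 (Fin n) → ℤ) :=
  Wfam n idx (n ^ 20)

/-- Concatenation of weight functions: `w ∘ w' = n²¹·w + w'`. -/
def concatW (n : ℕ) (w w' : Sym2 (Fin n) → ℤ) : Sym2 (Fin n) → ℤ :=
  fun e => (n : ℤ) ^ 21 * w e + w' e

/-- `W^k`: left-associated `k`-fold concatenations `w₁ ∘ ⋯ ∘ w_k` with each `wᵢ ∈ W`. -/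
def Wpow (n : ℕ) (idx : Sym2 (Fin n) → ℕ) : ℕ → Set (Sym2 (Fin n) → ℤ)
  | 0 => {fun _ => 0}
  | (k + 1) => {u | ∃ w ∈ Wpow n idx k, ∃ w' ∈ Wbig n idx, u = concatW n w w'}

/-- `idx` enumerates the edges of `G` as `e_1, …, e_{|E|}`. -/
def IsEnum {n : ℕ} (G : SimpleGraph (Fin n)) (idx : Sym2 (Fin n) → ℕ) : Prop :=
  Set.BijOn idx G.edgeSet (Set.Icc 1 G.edgeSet.ncard)

private lemma pow2_bound : ∀ n : ℕ, 14 ≤ n → 4*n^2+1 ≤ 2^(n-3) := by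
  intro n hn
  induction n, hn using Nat.le_induction with
  | base => norm_num
  | succ n hn ih =>
    have h : n + 1 - 3 = (n - 3) + 1 := by omega
    rw [h, pow_succ]
    have h2 : 4*(n+1)^2+1 ≤ (4*n^2+1) * 2 := by nlinarith
    calc 4*(n+1)^2+1 ≤ (4*n^2+1) * 2 := h2
      _ ≤ 2^(n-3) * 2 := Nat.mul_le_mul_right _ ih

private lemma mul_le_pow_self' {a s : ℕ} (ha : 2 ≤ a) (hs : 1 ≤ s) : a * s ≤ a ^ s := by
  have h1 : s ≤ 2 ^ (s-1) := by
    have := Nat.lt_two_pow_self (n := s-1); omega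
  calc a * s ≤ a * 2 ^ (s-1) := Nat.mul_le_mul_left _ h1
    _ ≤ a * a ^ (s-1) := Nat.mul_le_mul_left _ (Nat.pow_le_pow_left ha _)
    _ = a ^ (s-1) * a := Nat.mul_comm _ _
    _ = a ^ (s-1+1) := (pow_succ a (s-1)).symm
    _ = a ^ s := by congr 1; omega

private lemma keyineq (n s : ℕ) (hn : 14 ≤ n) (hs : 1 ≤ s) :
    n^2*s + (n-3)*((n^2+1)*s) + 2 ≤ n^3*s := by
  obtain ⟨c, rfl⟩ : ∃ c, n = c + 14 := ⟨n - 14, by omega⟩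
  have h3 : c + 14 - 3 = c + 11 := by omega
  rw [h3]
  nlinarith [sq_nonneg c, Nat.zero_le c]

/-- `centralBinom m` divides the lcm of `{2, …, t}` when `2 ≤ 2*m ≤ t`. -/
private lemma centralBinom_dvd_lcm_Icc {m t : ℕ} (hm : 1 ≤ m) (ht : 2 * m ≤ t) :
    Nat.centralBinom m ∣ (Finset.Icc 2 t).lcm id := by
  set L := (Finset.Icc 2 t).lcm id with hL
  have hLne : L ≠ 0 := by
    rw [hL, Ne, Finset.lcm_eq_zero_iff]
    rintro ⟨k, hk, hk0⟩
    simp only [Finset.mem_coe, Finset.mem_Icc] at hk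
    simp only [id_eq] at hk0
    omega
  rw [← Nat.factorization_le_iff_dvd (Nat.centralBinom_ne_zero m) hLne]
  intro p
  by_cases hp : p.Prime
  · set a := Nat.log p (2 * m) with ha
    have h1 : (Nat.centralBinom m).factorization p ≤ a := by
      rw [Nat.centralBinom_eq_two_mul_choose]
      exact Nat.factorization_choose_le_log
    rcases Nat.eq_zero_or_pos a with h0 | hapos
    · omega
    · have hpa : p ^ a ∣ L := by
        apply Finset.dvd_lcm (f := id) (b := p ^ a)
        simp only [Finset.mem_Icc]
        constructor
        · calc 2 ≤ p := hp.two_le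
            _ ≤ p ^ a := Nat.le_self_pow (by omega) p
        · calc p ^ a ≤ 2 * m := Nat.pow_log_le_self p (by omega)
            _ ≤ t := ht
      have := (Nat.Prime.pow_dvd_iff_le_factorization hp hLne).mp hpa
      omega
  · simp [Nat.factorization_eq_zero_of_not_prime _ hp]

/-- **Lemma 2.3 (oblivious nonzero circulations).**
For `n` sufficiently large: for any `s ≥ 1` with `n³s ≥ 7` and any nonzero vectors
`y_1, …, y_s ∈ ℤ^E` with `‖y_i‖₁ ≤ 4n²`, there is a weight function `w ∈ W(n³s)` with
`⟨y_i, w⟩ ≠ 0` for every `i`. -/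
theorem exists_weight_nonzero_dot :
    ∃ N : ℕ, ∀ n : ℕ, N ≤ n → ∀ G : SimpleGraph (Fin n),
      ∀ idx : Sym2 (Fin n) → ℕ, IsEnum G idx →
      ∀ s : ℕ, 1 ≤ s → 7 ≤ n ^ 3 * s →
      ∀ y : Fin s → (Sym2 (Fin n) → ℤ),
        (∀ i, y i ≠ 0 ∧ suppZ (y i) ⊆ G.edgeSet ∧ l1norm (y i) ≤ 4 * (n : ℤ) ^ 2) →
        ∃ w ∈ Wfam n idx (n ^ 3 * s), ∀ i, dotZ (y i) w ≠ 0 := by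
  use 14
  intro n hn G idx henum s hs hts y hy
  classical
  set t := n ^ 3 * s with ht_def
  set B : ℕ := 4 * n ^ 2 + 1 with hB_def
  have hBcast : ((B : ℤ)) = 4 * (n : ℤ) ^ 2 + 1 := by push_cast [hB_def]; ring
  have hB2 : 2 ≤ B := by nlinarith [hn]
  set Y : Fin s → ℤ := fun i => ∑ e : Sym2 (Fin n), y i e * (B : ℤ) ^ (idx e) with hY_def
  have hM : G.edgeSet.ncard ≤ n ^ 2 := by
    have h1 : G.edgeSet.ncard ≤ (Set.univ : Set (Sym2 (Fin n))).ncard :=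
      Set.ncard_le_ncard (Set.subset_univ _) Set.finite_univ
    rw [Set.ncard_univ, Nat.card_eq_fintype_card, Sym2.card] at h1
    have h2 : (Fintype.card (Fin n) + 1).choose 2
        = (Fintype.card (Fin n) + 1) * Fintype.card (Fin n) / 2 := by
      rw [Nat.choose_two_right]; simp
    rw [h2, Fintype.card_fin] at h1
    have h3 : (n + 1) * n ≤ 2 * n ^ 2 + 1 := by nlinarith
    omega
  have hedge : ∀ i : Fin s, ∀ e : Sym2 (Fin n), y i e ≠ 0 → e ∈ G.edgeSet := by
    intro i e he
    exact (hy i).2.1 he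
  have hidx : ∀ i : Fin s, ∀ e : Sym2 (Fin n), y i e ≠ 0 → 1 ≤ idx e ∧ idx e ≤ n ^ 2 := by
    intro i e he
    have hmem := henum.mapsTo (hedge i e he)
    rw [Set.mem_Icc] at hmem
    exact ⟨hmem.1, hmem.2.trans hM⟩
  have hB1 : (1 : ℤ) ≤ (B : ℤ) := by exact_mod_cast Nat.one_le_iff_ne_zero.mpr (by omega)
  have habs : ∀ i : Fin s, ∀ e : Sym2 (Fin n), ∀ d : ℕ, idx e ≤ d →
      |y i e * (B : ℤ) ^ (idx e)| ≤ |y i e| * (B : ℤ) ^ d := by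
    intro i e d hd
    rw [abs_mul, abs_pow, abs_of_nonneg (by linarith : (0:ℤ) ≤ (B:ℤ))]
    exact mul_le_mul_of_nonneg_left (pow_le_pow_right₀ hB1 hd) (abs_nonneg _)
  have hYnz : ∀ i, Y i ≠ 0 := by
    intro i hzero
    obtain ⟨hne, hsupp, hl1⟩ := hy i
    have hex : ∃ e, y i e ≠ 0 := by
      by_contra hc
      push_neg at hc
      exact hne (funext fun e => hc e)
    obtain ⟨e₁, he₁⟩ := hex
    set T : Finset (Sym2 (Fin n)) := Finset.univ.filter (fun e => y i e ≠ 0) with hT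
    have hTne : T.Nonempty := ⟨e₁, by simp [hT, he₁]⟩
    obtain ⟨e₀, he₀T, hmax⟩ := T.exists_max_image idx hTne
    have he₀ : y i e₀ ≠ 0 := by simpa [hT] using he₀T
    set d := idx e₀ with hd
    have hd1 : 1 ≤ d := (hidx i e₀ he₀).1
    have hsumT : Y i = ∑ e ∈ T, y i e * (B : ℤ) ^ (idx e) := by
      rw [hY_def]
      refine (Finset.sum_subset (Finset.subset_univ T) ?_).symm
      intro e _ heT
      have : y i e = 0 := by
        by_contra hc
        exact heT (by simp [hT, hc])
      simp [this]
    have hsplit : y i e₀ * (B : ℤ) ^ d + ∑ e ∈ T.erase e₀, y i e * (B : ℤ) ^ (idx e) = Y i := by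
      rw [hsumT]
      exact Finset.add_sum_erase T (fun e => y i e * (B : ℤ) ^ (idx e)) he₀T
    have hrest : |∑ e ∈ T.erase e₀, y i e * (B : ℤ) ^ (idx e)|
        ≤ (4 * (n:ℤ)^2) * (B : ℤ) ^ (d - 1) := by
      calc |∑ e ∈ T.erase e₀, y i e * (B : ℤ) ^ (idx e)|
          ≤ ∑ e ∈ T.erase e₀, |y i e * (B : ℤ) ^ (idx e)| :=
            Finset.abs_sum_le_sum_abs _ _
        _ ≤ ∑ e ∈ T.erase e₀, |y i e| * (B : ℤ) ^ (d - 1) := by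
            refine Finset.sum_le_sum ?_
            intro e heE
            have heT' := Finset.mem_of_mem_erase heE
            have hee₀ : e ≠ e₀ := Finset.ne_of_mem_erase heE
            have hye : y i e ≠ 0 := by simpa [hT] using heT'
            have hle : idx e ≤ d := hmax e heT'
            have hne' : idx e ≠ d := by
              intro hcon'
              exact hee₀ (henum.injOn (hedge i e hye) (hedge i e₀ he₀) hcon')
            exact habs i e (d - 1) (by omega)
        _ = (∑ e ∈ T.erase e₀, |y i e|) * (B : ℤ) ^ (d - 1) := by
            rw [Finset.sum_mul]
        _ ≤ (4 * (n:ℤ)^2) * (B : ℤ) ^ (d - 1) := by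
            refine mul_le_mul_of_nonneg_right ?_ (by positivity)
            calc ∑ e ∈ T.erase e₀, |y i e| ≤ ∑ e : Sym2 (Fin n), |y i e| := by
                  refine Finset.sum_le_sum_of_subset_of_nonneg (Finset.subset_univ _) ?_
                  intro e _ _; exact abs_nonneg _
              _ ≤ 4 * (n:ℤ)^2 := hl1
    have hmain : ((B:ℤ)) * (B : ℤ) ^ (d-1) ≤ (4 * (n:ℤ)^2) * (B : ℤ) ^ (d - 1) := by
      have h1 : |y i e₀ * (B : ℤ) ^ d| = |∑ e ∈ T.erase e₀, y i e * (B : ℤ) ^ (idx e)| := by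
        have : y i e₀ * (B : ℤ) ^ d = -∑ e ∈ T.erase e₀, y i e * (B : ℤ) ^ (idx e) := by
          rw [hzero] at hsplit; linarith
        rw [this, abs_neg]
      have h2 : (B:ℤ) ^ d ≤ |y i e₀ * (B : ℤ) ^ d| := by
        rw [abs_mul, abs_pow, abs_of_nonneg (by linarith : (0:ℤ) ≤ (B:ℤ))]
        have : (1:ℤ) ≤ |y i e₀| := by
          rcases lt_or_ge (y i e₀) 0 with h | h
          · rw [abs_of_neg h]; omega
          · rw [abs_of_nonneg h]; omega
        nlinarith [pow_pos (by linarith : (0:ℤ) < (B:ℤ)) d]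
      have h3 : (B:ℤ) ^ d = (B:ℤ) * (B:ℤ) ^ (d - 1) := by
        rw [← pow_succ']
        congr 1
        omega
      calc (B:ℤ) * (B:ℤ) ^ (d-1) = (B:ℤ) ^ d := h3.symm
        _ ≤ |y i e₀ * (B : ℤ) ^ d| := h2
        _ = _ := h1
        _ ≤ _ := hrest
    have hpow : (0:ℤ) < (B:ℤ) ^ (d-1) := pow_pos (by linarith) _
    have := (mul_le_mul_iff_of_pos_right hpow).mp hmain
    rw [hBcast] at this
    linarith
  have hYabs : ∀ i, (Y i).natAbs ≤ B ^ (n ^ 2 + 1) := by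
    intro i
    obtain ⟨hne, hsupp, hl1⟩ := hy i
    have h1 : |Y i| ≤ ((B : ℤ)) ^ (n^2+1) := by
      calc |Y i| ≤ ∑ e : Sym2 (Fin n), |y i e * (B : ℤ) ^ (idx e)| :=
            Finset.abs_sum_le_sum_abs _ _
        _ ≤ ∑ e : Sym2 (Fin n), |y i e| * (B : ℤ) ^ (n^2) := by
            refine Finset.sum_le_sum ?_
            intro e _
            rcases eq_or_ne (y i e) 0 with h | h
            · simp [h]
            · exact habs i e (n^2) (hidx i e h).2
        _ = (∑ e : Sym2 (Fin n), |y i e|) * (B : ℤ) ^ (n^2) := by rw [Finset.sum_mul]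
        _ ≤ (4 * (n:ℤ)^2) * (B : ℤ) ^ (n^2) :=
            mul_le_mul_of_nonneg_right hl1 (by positivity)
        _ ≤ (B : ℤ) * (B : ℤ) ^ (n^2) := by
            refine mul_le_mul_of_nonneg_right ?_ (by positivity)
            rw [hBcast]; linarith
        _ = (B : ℤ) ^ (n^2+1) := by rw [← pow_succ']
    have h2 : ((Y i).natAbs : ℤ) ≤ ((B ^ (n^2+1) : ℕ) : ℤ) := by
      rw [Int.natCast_natAbs]
      push_cast
      exact h1
    exact_mod_cast h2
  by_contra hcon
  push_neg at hcon
  -- every k ∈ [2, t] divides some Y i, hence divides P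
  set P : ℕ := ∏ i : Fin s, (Y i).natAbs with hP_def
  have hPne : P ≠ 0 := by
    simp only [hP_def, Finset.prod_ne_zero_iff]
    intro i _
    simpa using hYnz i
  have hdvdP : ∀ k ∈ Finset.Icc 2 t, k ∣ P := by
    intro k hk
    rw [Finset.mem_Icc] at hk
    set w : Sym2 (Fin n) → ℤ := fun e => ((4 * (n : ℤ) ^ 2 + 1) ^ (idx e)) % (k : ℤ) with hw_def
    have hw : w ∈ Wfam n idx t := ⟨k, hk.1, hk.2, rfl⟩
    obtain ⟨i, hi⟩ := hcon w hw
    have hdiv : (k : ℤ) ∣ Y i := by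
      have heq : Y i - dotZ (y i) w
          = ∑ e : Sym2 (Fin n), y i e * ((B : ℤ) ^ (idx e) - w e) := by
        rw [hY_def, dotZ, ← Finset.sum_sub_distrib]
        refine Finset.sum_congr rfl ?_
        intro e _
        ring
      have hdvd2 : (k : ℤ) ∣ Y i - dotZ (y i) w := by
        rw [heq]
        refine Finset.dvd_sum ?_
        intro e _
        refine Dvd.dvd.mul_left ?_ _
        have := Int.mul_ediv_add_emod ((B : ℤ) ^ (idx e)) (k : ℤ)
        refine ⟨(B : ℤ) ^ (idx e) / (k : ℤ), ?_⟩
        rw [hw_def]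
        simp only [← hBcast]
        linarith
      rw [hi, sub_zero] at hdvd2
      exact hdvd2
    have hdvd3 : k ∣ (Y i).natAbs := by
      have := Int.natAbs_dvd_natAbs.mpr hdiv
      simpa using this
    exact hdvd3.trans (Finset.dvd_prod_of_mem _ (Finset.mem_univ i))
  have hlcm : (Finset.Icc 2 t).lcm id ∣ P := Finset.lcm_dvd hdvdP
  set m := t / 2 with hm_def
  have hm1 : 1 ≤ m := by omega
  have hmt : 2 * m ≤ t := by omega
  have hcb : Nat.centralBinom m ∣ P := (centralBinom_dvd_lcm_Icc hm1 hmt).trans hlcm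
  have h4 : 4 ^ m ≤ 2 * m * P :=
    le_trans (Nat.four_pow_le_two_mul_self_mul_centralBinom m hm1)
      (Nat.mul_le_mul_left _ (Nat.le_of_dvd (Nat.pos_of_ne_zero hPne) hcb))
  -- size bound: 2 * m * P < 4 ^ m
  have hsize : 2 * m * P < 4 ^ m := by
    have hPb : P ≤ 2 ^ ((n-3) * ((n^2+1) * s)) := by
      calc P ≤ ∏ _i : Fin s, B ^ (n^2+1) :=
            Finset.prod_le_prod' (fun i _ => hYabs i)
        _ = (B ^ (n^2+1)) ^ s := by
            rw [Finset.prod_const, Finset.card_univ, Fintype.card_fin]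
        _ = B ^ ((n^2+1) * s) := by rw [← pow_mul]
        _ ≤ (2 ^ (n-3)) ^ ((n^2+1) * s) :=
            Nat.pow_le_pow_left (by simpa [hB_def] using pow2_bound n hn) _
        _ = 2 ^ ((n-3) * ((n^2+1) * s)) := by rw [← pow_mul]
    have htb : t ≤ 2 ^ (n^2 * s) := by
      calc t = n^3 * s := ht_def
        _ ≤ (n^3) ^ s := mul_le_pow_self' (by nlinarith) hs
        _ ≤ (2 ^ (n^2)) ^ s := by
            refine Nat.pow_le_pow_left ?_ s
            calc n^3 ≤ (2^n)^3 := Nat.pow_le_pow_left (Nat.lt_two_pow_self (n := n)).le 3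
              _ = 2 ^ (n*3) := by rw [← pow_mul]
              _ ≤ 2 ^ (n^2) := Nat.pow_le_pow_right (by norm_num) (by nlinarith)
        _ = 2 ^ (n^2 * s) := by rw [← pow_mul]
    have hexp : n^2*s + (n-3)*((n^2+1)*s) + 2 ≤ t := keyineq n s hn hs
    have h2m : t - 1 ≤ 2 * m := by omega
    calc 2 * m * P ≤ 2 ^ (n^2 * s) * 2 ^ ((n-3) * ((n^2+1) * s)) :=
          Nat.mul_le_mul (le_trans (by omega) htb) hPb
      _ = 2 ^ (n^2 * s + (n-3) * ((n^2+1) * s)) := by rw [← pow_add]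
      _ < 2 ^ (2 * m) := Nat.pow_lt_pow_right (by norm_num) (by omega)
      _ = 4 ^ m := by rw [pow_mul]; norm_num
  omega
end PMQuasiNC
end
end

section
/- Let F be a face of the perfect matching polytope and let S ⊆ T be two sets with S, T ∈ tight(F). If T is F-contractible, then S is F-contractible. -/
/- Formalization framework for "The Matching Problem in General Graphs is in Quasi-NC"
(Svensson–Tarnawski).  The graph has vertex set `Fin n`; vectors indexed by edges are
modelled as functions `Sym2 (Fin n) → ℝ` (resp. `ℤ`) supported on the edge set. -/

open scoped BigOperators
open scoped Classical

noncomputable section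

namespace PMQuasiNC

/-- An edge in a cut is not an inside edge. -/
lemma cut_not_inside {n : ℕ} {G : SimpleGraph (Fin n)} {S : Finset (Fin n)}
    {e : Sym2 (Fin n)} (he : e ∈ cut G S) : e ∉ insideEdges G S := by
  obtain ⟨hE, u, v, rfl, huS, hvS⟩ := he
  rintro ⟨_, h⟩
  exact hvS (h v (Sym2.mem_iff.mpr (Or.inr rfl)))

/-- An edge with an endpoint in `S` which is not in the cut lies inside `S`. -/
lemma inside_of_not_cut {n : ℕ} {G : SimpleGraph (Fin n)} {S : Finset (Fin n)}
    {f : Sym2 (Fin n)} (hf : f ∈ G.edgeSet) {w : Fin n} (hw : w ∈ f) (hwS : w ∈ S)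
    (hnc : f ∉ cut G S) : f ∈ insideEdges G S := by
  refine ⟨hf, fun x hx => ?_⟩
  by_contra hxS
  have hne : w ≠ x := fun h => hxS (h ▸ hwS)
  have hfe : f = s(w, x) := (Sym2.mem_and_mem_iff hne).mp ⟨hw, hx⟩
  exact hnc ⟨hf, w, x, hfe, hwS, hxS⟩

/-- A perfect matching on a face has a unique edge in the cut of each tight set. -/
lemma tight_unique_cut {n : ℕ} {G : SimpleGraph (Fin n)} {F : Set (Sym2 (Fin n) → ℝ)}
    {S : Finset (Fin n)} (hS : S ∈ tightSets G F) {M : Set (Sym2 (Fin n))}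
    (hM : IsPerfectMatching G M) (hMF : indic M ∈ F) :
    ∃ a, (a ∈ M ∧ a ∈ cut G S) ∧ ∀ f, f ∈ M → f ∈ cut G S → f = a := by
  have h1 : dotR (cutInd G S) (indic M) = 1 := hS.2 _ hMF
  have h2 : dotR (cutInd G S) (indic M)
      = ((Finset.univ.filter (fun e => e ∈ M ∧ e ∈ cut G S)).card : ℝ) := by
    rw [dotR, Finset.card_filter]
    push_cast
    refine Finset.sum_congr rfl fun e _ => ?_
    by_cases hc : e ∈ cut G S <;> by_cases hm : e ∈ M <;>
      simp [cutInd, indic, hc, hm]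
  rw [h2] at h1
  have h3 : (Finset.univ.filter (fun e => e ∈ M ∧ e ∈ cut G S)).card = 1 := by
    exact_mod_cast h1
  obtain ⟨a, ha⟩ := Finset.card_eq_one.mp h3
  have hmem : ∀ f, f ∈ M ∧ f ∈ cut G S ↔ f = a := by
    intro f
    rw [← Finset.mem_singleton, ← ha, Finset.mem_filter]
    simp
  exact ⟨a, (hmem a).mpr rfl, fun f hf hc => (hmem f).mp ⟨hf, hc⟩⟩

/-- Swapping the inside of a tight set between two matchings sharing the unique cut
edge yields a perfect matching. -/
lemma swap_pm {n : ℕ} {G : SimpleGraph (Fin n)} {S : Finset (Fin n)} {e : Sym2 (Fin n)}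
    (he : e ∈ cut G S) {M₁ M₂ : Set (Sym2 (Fin n))}
    (h1 : IsPerfectMatching G M₁) (h2 : IsPerfectMatching G M₂)
    (he1 : e ∈ M₁) (he2 : e ∈ M₂)
    (hu1 : ∀ f ∈ M₁, f ∈ cut G S → f = e)
    (hu2 : ∀ f ∈ M₂, f ∈ cut G S → f = e) :
    IsPerfectMatching G ((M₁ ∩ insideEdges G S) ∪ (M₂ \ insideEdges G S)) := by
  constructor
  · rintro f (⟨hf, _⟩ | ⟨hf, _⟩)
    exacts [h1.1 hf, h2.1 hf]
  · intro v
    by_cases hvS : v ∈ S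
    · obtain ⟨g, ⟨hgM, hgv⟩, hgu⟩ := h1.2 v
      by_cases hgi : g ∈ insideEdges G S
      · refine ⟨g, ⟨Or.inl ⟨hgM, hgi⟩, hgv⟩, ?_⟩
        rintro f ⟨(⟨hfM, hfi⟩ | ⟨hfM, hfi⟩), hfv⟩
        · exact hgu f ⟨hfM, hfv⟩
        · have hfc : f ∈ cut G S := by
            by_contra hnc
            exact hfi (inside_of_not_cut (h2.1 hfM) hfv hvS hnc)
          have hfe : f = e := hu2 f hfM hfc
          have hge : g = e := (hgu e ⟨he1, hfe ▸ hfv⟩).symm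
          exact absurd (hge ▸ hgi) (cut_not_inside he)
      · have hgc : g ∈ cut G S := by
          by_contra hnc
          exact hgi (inside_of_not_cut (h1.1 hgM) hgv hvS hnc)
        have hge : g = e := hu1 g hgM hgc
        refine ⟨e, ⟨Or.inr ⟨he2, cut_not_inside he⟩, hge ▸ hgv⟩, ?_⟩
        rintro f ⟨(⟨hfM, hfi⟩ | ⟨hfM, hfi⟩), hfv⟩
        · exact (hgu f ⟨hfM, hfv⟩).trans hge
        · have hfc : f ∈ cut G S := by
            by_contra hnc
            exact hfi (inside_of_not_cut (h2.1 hfM) hfv hvS hnc)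
          exact hu2 f hfM hfc
    · obtain ⟨g, ⟨hgM, hgv⟩, hgu⟩ := h2.2 v
      have hgi : g ∉ insideEdges G S := fun h => hvS (h.2 v hgv)
      refine ⟨g, ⟨Or.inr ⟨hgM, hgi⟩, hgv⟩, ?_⟩
      rintro f ⟨(⟨hfM, hfi⟩ | ⟨hfM, _⟩), hfv⟩
      · exact absurd (hfi.2 v hfv) hvS
      · exact hgu f ⟨hfM, hfv⟩

/-- If two matchings on a face recombine (pointwise) into two other perfect
matchings, the latter also lie on the face. -/
lemma swap_mem_face {n : ℕ} {G : SimpleGraph (Fin n)} {F : Set (Sym2 (Fin n) → ℝ)}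
    (hF : IsFace G F) {M₁ M₂ M₃ M₄ : Set (Sym2 (Fin n))}
    (h3 : IsPerfectMatching G M₃) (h4 : IsPerfectMatching G M₄)
    (hF1 : indic M₁ ∈ F) (hF2 : indic M₂ ∈ F)
    (hsum : ∀ f, indic M₁ f + indic M₂ f = indic M₃ f + indic M₄ f) :
    indic M₃ ∈ F := by
  obtain ⟨-, w, rfl⟩ := hF
  obtain ⟨hm1, hmin1⟩ := hF1
  obtain ⟨hm2, hmin2⟩ := hF2
  have hp3 : indic M₃ ∈ PMpoly G := subset_convexHull ℝ _ ⟨M₃, h3, rfl⟩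
  have hp4 : indic M₄ ∈ PMpoly G := subset_convexHull ℝ _ ⟨M₄, h4, rfl⟩
  have hsum' : dotR w (indic M₁) + dotR w (indic M₂)
      = dotR w (indic M₃) + dotR w (indic M₄) := by
    rw [dotR, dotR, dotR, dotR, ← Finset.sum_add_distrib, ← Finset.sum_add_distrib]
    refine Finset.sum_congr rfl fun e _ => ?_
    rw [← mul_add, ← mul_add, hsum]
  have h13 := hmin1 _ hp3
  have h14 := hmin1 _ hp4
  have h21 := hmin2 _ hm1
  have h12 := hmin1 _ hm2
  refine ⟨hp3, fun y hy => ?_⟩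
  have hy1 := hmin1 y hy
  linarith

/-- Restricting an equality of intersections to a smaller set. -/
lemma inter_eq_of_inter_eq {α : Type*} {A B I J : Set α} (h : A ∩ J = B ∩ J)
    (hIJ : I ⊆ J) : A ∩ I = B ∩ I := by
  ext f
  constructor
  · rintro ⟨hA, hI⟩
    have hm : f ∈ B ∩ J := h ▸ (⟨hA, hIJ hI⟩ : f ∈ A ∩ J)
    exact ⟨hm.1, hI⟩
  · rintro ⟨hB, hI⟩
    have hm : f ∈ A ∩ J := h.symm ▸ (⟨hB, hIJ hI⟩ : f ∈ B ∩ J)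
    exact ⟨hm.1, hI⟩

/-- **Lemma (contractibility is downward closed).**
Let `F` be a face of the perfect matching polytope and `S ⊆ T` with
`S, T ∈ tight(F)`.  If `T` is `F`-contractible, then so is `S`. -/
theorem contractible_downward_closed (n : ℕ) (G : SimpleGraph (Fin n))
    (F : Set (Sym2 (Fin n) → ℝ)) (hF : IsFace G F)
    (S T : Finset (Fin n)) (hST : S ⊆ T)
    (hS : S ∈ tightSets G F) (hT : T ∈ tightSets G F)
    (hc : Contractible G F T) :
    Contractible G F S := by
  intro e he M₁ M₂ h1 h2 hF1 hF2 he1 he2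
  have hmono : insideEdges G S ⊆ insideEdges G T :=
    fun f hf => ⟨hf.1, fun x hx => hST (hf.2 x hx)⟩
  obtain ⟨heE, u, v, hev, huS, hvS⟩ := he
  have he' : e ∈ cut G S := ⟨heE, u, v, hev, huS, hvS⟩
  by_cases hvT : v ∈ T
  · -- `e` lies inside `T`; recombine the matchings inside `S`.
    obtain ⟨a, ⟨haM, hac⟩, hau⟩ := tight_unique_cut hS h1 hF1
    obtain ⟨b, ⟨hbM, hbc⟩, hbu⟩ := tight_unique_cut hS h2 hF2
    have hu1 : ∀ f ∈ M₁, f ∈ cut G S → f = e :=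
      fun f hf hfc => (hau f hf hfc).trans (hau e he1 he').symm
    have hu2 : ∀ f ∈ M₂, f ∈ cut G S → f = e :=
      fun f hf hfc => (hbu f hf hfc).trans (hbu e he2 he').symm
    set I := insideEdges G S with hI
    have h3 : IsPerfectMatching G ((M₁ ∩ I) ∪ (M₂ \ I)) :=
      swap_pm he' h1 h2 he1 he2 hu1 hu2
    have h4 : IsPerfectMatching G ((M₂ ∩ I) ∪ (M₁ \ I)) :=
      swap_pm he' h2 h1 he2 he1 hu2 hu1
    have hsum : ∀ f, indic M₁ f + indic M₂ f
        = indic ((M₁ ∩ I) ∪ (M₂ \ I)) f + indic ((M₂ ∩ I) ∪ (M₁ \ I)) f := by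
      intro f
      by_cases hIf : f ∈ I <;> by_cases hf1 : f ∈ M₁ <;> by_cases hf2 : f ∈ M₂ <;>
        simp [indic, Set.mem_union, Set.mem_inter_iff, Set.mem_diff, hIf, hf1, hf2]
    have hF3 : indic ((M₁ ∩ I) ∪ (M₂ \ I)) ∈ F :=
      swap_mem_face hF h3 h4 hF1 hF2 hsum
    -- the unique cut-`T` edge of `M₂` also lies in the recombined matching
    obtain ⟨c, ⟨hcM, hcc⟩, hcu⟩ := tight_unique_cut hT h2 hF2
    have hcni : c ∉ I := by
      obtain ⟨hcE, p, q, hcpq, hpT, hqT⟩ := hcc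
      intro hci
      exact hqT (hST (hci.2 q (hcpq ▸ Sym2.mem_iff.mpr (Or.inr rfl))))
    have hcM3 : c ∈ (M₁ ∩ I) ∪ (M₂ \ I) := Or.inr ⟨hcM, hcni⟩
    have key : M₂ ∩ insideEdges G T = ((M₁ ∩ I) ∪ (M₂ \ I)) ∩ insideEdges G T :=
      hc c hcc M₂ _ h2 h3 hF2 hF3 hcM hcM3
    have keyS : M₂ ∩ I = ((M₁ ∩ I) ∪ (M₂ \ I)) ∩ I :=
      inter_eq_of_inter_eq key hmono
    have hM3S : ((M₁ ∩ I) ∪ (M₂ \ I)) ∩ I = M₁ ∩ I := by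
      ext f
      constructor
      · rintro ⟨(⟨hfa, hfb⟩ | ⟨hfa, hfb⟩), hfI⟩
        · exact ⟨hfa, hfI⟩
        · exact absurd hfI hfb
      · rintro ⟨hfa, hfI⟩
        exact ⟨Or.inl ⟨hfa, hfI⟩, hfI⟩
    exact (keyS.trans hM3S).symm
  · -- `e ∈ δ(T)`: apply contractibility of `T` directly.
    have heT : e ∈ cut G T := ⟨heE, u, v, hev, hST huS, hvT⟩
    have key : M₁ ∩ insideEdges G T = M₂ ∩ insideEdges G T :=
      hc e heT M₁ M₂ h1 h2 hF1 hF2 he1 he2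
    exact inter_eq_of_inter_eq key hmono
end PMQuasiNC
end
end

section
/- Suppose (F,L) is a λ-good face-laminar pair for some λ with n ≤ λ ≤ 2n. Then the face F consists of a single point, i.e., F contains exactly one perfect matching. -/
/- Formalization framework for "The Matching Problem in General Graphs is in Quasi-NC"
(Svensson–Tarnawski).  The graph has vertex set `Fin n`; vectors indexed by edges are
modelled as functions `Sym2 (Fin n) → ℝ` (resp. `ℤ`) supported on the edge set. -/

open scoped BigOperators
open scoped Classical

noncomputable section

namespace PMQuasiNC

/-! ### Auxiliary development -/

section Aux

variable {n : ℕ} {G : SimpleGraph (Fin n)}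

/-- The partner of a vertex in a matching. -/
noncomputable def partner (M : Set (Sym2 (Fin n))) (u : Fin n) : Fin n :=
  if h : ∃ x, s(u, x) ∈ M then h.choose else u

lemma partner_spec {M : Set (Sym2 (Fin n))} (hM : IsPerfectMatching G M) (u : Fin n) :
    s(u, partner M u) ∈ M := by
  obtain ⟨e, ⟨heM, heu⟩, -⟩ := hM.2 u
  induction e using Sym2.inductionOn with
  | hf c d =>
    have h : ∃ x, s(u, x) ∈ M := by
      rcases Sym2.mem_iff.mp heu with rfl | rfl
      · exact ⟨d, heM⟩
      · exact ⟨c, by rwa [Sym2.eq_swap]⟩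
    rw [partner, dif_pos h]
    exact h.choose_spec

lemma partner_eq {M : Set (Sym2 (Fin n))} (hM : IsPerfectMatching G M) {u : Fin n}
    {e : Sym2 (Fin n)} (he : e ∈ M) (hu : u ∈ e) : e = s(u, partner M u) := by
  obtain ⟨f, -, huniq⟩ := hM.2 u
  have h1 := huniq e ⟨he, hu⟩
  have h2 := huniq _ ⟨partner_spec hM u, by simp⟩
  rw [h1, h2]

lemma partner_ne {M : Set (Sym2 (Fin n))} (hM : IsPerfectMatching G M) (u : Fin n) :
    partner M u ≠ u := by
  have h := hM.1 (partner_spec hM u)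
  rw [SimpleGraph.mem_edgeSet] at h
  exact h.ne'

lemma partner_invol {M : Set (Sym2 (Fin n))} (hM : IsPerfectMatching G M) (u : Fin n) :
    partner M (partner M u) = u := by
  have h := partner_eq hM (partner_spec hM u) (Sym2.mem_mk_right u (partner M u))
  rw [Sym2.eq_iff] at h
  rcases h with ⟨h1, -⟩ | ⟨h1, -⟩
  · exact absurd h1.symm (partner_ne hM u)
  · exact h1.symm

lemma partner_injective {M : Set (Sym2 (Fin n))} (hM : IsPerfectMatching G M) :
    Function.Injective (partner M) := by
  intro a b hab
  have := congrArg (partner M) hab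
  rwa [partner_invol hM, partner_invol hM] at this

/-- Swapping a matching along an alternating set of edges. -/
lemma swap_pm_s11 {A B C : Set (Sym2 (Fin n))}
    (hA : IsPerfectMatching G A) (hB : IsPerfectMatching G B)
    (hAB : ∀ e ∈ C, e ∈ A ↔ e ∉ B)
    (hcA : ∀ u, (∃ e ∈ C, u ∈ e) → ∀ f ∈ A, u ∈ f → f ∈ C)
    (hcB : ∀ u, (∃ e ∈ C, u ∈ e) → ∀ f ∈ B, u ∈ f → f ∈ C) :
    IsPerfectMatching G ((A \ C) ∪ (C \ A)) := by
  constructor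
  · intro e he
    rcases he with ⟨heA, -⟩ | ⟨heC, heA⟩
    · exact hA.1 heA
    · exact hB.1 (by by_contra hB'; exact heA ((hAB e heC).mpr hB'))
  · intro u
    by_cases hcov : ∃ e ∈ C, u ∈ e
    · -- u is covered by C: the unique edge is the B-edge at u
      refine ⟨s(u, partner B u), ⟨?_, by simp⟩, ?_⟩
      · have hBC : s(u, partner B u) ∈ C := hcB u hcov _ (partner_spec hB u) (by simp)
        have : s(u, partner B u) ∉ A := by
          intro hA'
          exact ((hAB _ hBC).mp hA') (partner_spec hB u)
        exact Or.inr ⟨hBC, this⟩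
      · rintro f ⟨hf, huf⟩
        rcases hf with ⟨hfA, hfC⟩ | ⟨hfC, hfA⟩
        · exact absurd (hcA u hcov f hfA huf) hfC
        · have hfB : f ∈ B := by by_contra hB'; exact hfA ((hAB f hfC).mpr hB')
          exact partner_eq hB hfB huf
    · -- u not covered by C: the unique edge is the A-edge at u
      push_neg at hcov
      refine ⟨s(u, partner A u), ⟨?_, by simp⟩, ?_⟩
      · exact Or.inl ⟨partner_spec hA u, fun hC => hcov _ hC (by simp)⟩
      · rintro f ⟨hf, huf⟩
        rcases hf with ⟨hfA, -⟩ | ⟨hfC, -⟩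
        · exact partner_eq hA hfA huf
        · exact absurd huf (hcov f hfC)


/-- A simple alternating cycle for the pair of matchings `M₁, M₂`. -/
def GoodCycle (M₁ M₂ : Set (Sym2 (Fin n))) (k : ℕ) (v : ℕ → Fin n) : Prop :=
  2 < k ∧ k % 2 = 0 ∧ v k = v 0 ∧
  (∀ t, t < k → t % 2 = 0 → s(v t, v (t+1)) ∈ M₁ \ M₂) ∧
  (∀ t, t < k → t % 2 = 1 → s(v t, v (t+1)) ∈ M₂ \ M₁) ∧
  (∀ i j, i < j → j < k → v i ≠ v j)

lemma exists_goodCycle {M₁ M₂ : Set (Sym2 (Fin n))}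
    (h₁ : IsPerfectMatching G M₁) (h₂ : IsPerfectMatching G M₂)
    {a b : Fin n} (hab : s(a, b) ∈ M₁) (hab2 : s(a, b) ∉ M₂) :
    ∃ k v, GoodCycle M₁ M₂ k v ∧ v 0 = a := by
  classical
  set p₁ := partner M₁ with hp₁def
  set p₂ := partner M₂ with hp₂def
  let v : ℕ → Fin n := fun t => Nat.rec a (fun s u => if s % 2 = 0 then p₁ u else p₂ u) t
  have hv0 : v 0 = a := rfl
  have hvs : ∀ t, v (t+1) = if t % 2 = 0 then p₁ (v t) else p₂ (v t) := fun t => rfl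
  have hstep1 : ∀ t, t % 2 = 0 → s(v t, v (t+1)) ∈ M₁ := by
    intro t ht; rw [hvs t, if_pos ht]; exact partner_spec h₁ _
  have hstep2 : ∀ t, t % 2 = 1 → s(v t, v (t+1)) ∈ M₂ := by
    intro t ht; rw [hvs t, if_neg (by omega)]; exact partner_spec h₂ _
  have hback : ∀ s t, s % 2 = t % 2 → v (s+1) = v (t+1) → v s = v t := by
    intro s t hp h
    rw [hvs s, hvs t] at h
    by_cases hs : s % 2 = 0
    · rw [if_pos hs, if_pos (hp ▸ hs)] at h; exact partner_injective h₁ h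
    · rw [if_neg hs, if_neg (hp ▸ hs)] at h; exact partner_injective h₂ h
  have hshift : ∀ m s t, s % 2 = t % 2 → v (s+m) = v (t+m) → v s = v t := by
    intro m
    induction m with
    | zero => intro s t _ h; exact h
    | succ m ih =>
      intro s t hp h
      exact ih s t hp (hback (s+m) (t+m) (by omega) h)
  have hrep : ∃ d, 0 < d ∧ d % 2 = 0 ∧ v d = v 0 := by
    have key : ∀ x y : ℕ, x < y →
        (v x, decide (x % 2 = 0)) = (v y, decide (y % 2 = 0)) →
        ∃ d, 0 < d ∧ d % 2 = 0 ∧ v d = v 0 := by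
      intro x y hlt heq
      have hv : v x = v y := congrArg Prod.fst heq
      have hb : decide (x % 2 = 0) = decide (y % 2 = 0) := congrArg Prod.snd heq
      have hp : x % 2 = y % 2 := by
        have := decide_eq_decide.mp hb; omega
      refine ⟨y - x, by omega, by omega, ?_⟩
      apply hshift x (y-x) 0 (by omega)
      rw [Nat.sub_add_cancel hlt.le, Nat.zero_add]
      exact hv.symm
    obtain ⟨x, y, hxy, hfxy⟩ :=
      Finite.exists_ne_map_eq_of_infinite (fun t : ℕ => (v t, decide (t % 2 = 0)))
    rcases hxy.lt_or_gt with h | h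
    · exact key x y h hfxy
    · exact key y x h hfxy.symm
  haveI : DecidablePred (fun d => 0 < d ∧ d % 2 = 0 ∧ v d = v 0) :=
    fun _ => Classical.propDecidable _
  set k := Nat.find hrep with hkdef
  obtain ⟨hk0, hkpar, hkv⟩ := Nat.find_spec hrep
  have hperiod : ∀ i j, i < j → v i = v j → i % 2 = j % 2 → k ≤ j - i := by
    intro i j hij hv hp
    apply Nat.find_le
    refine ⟨by omega, by omega, ?_⟩
    apply hshift i (j-i) 0 (by omega)
    rw [Nat.sub_add_cancel hij.le, Nat.zero_add]
    exact hv.symm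
  have hb : b = p₁ a := by
    have h := partner_eq h₁ hab (Sym2.mem_mk_left a b)
    rw [Sym2.congr_right] at h
    exact h
  have hk2 : k ≠ 2 := by
    intro h2
    have hv2 : v 2 = v 0 := by rw [← h2]; exact hkv
    have h1 : v 1 = p₁ a := by
      rw [show (1:ℕ) = 0+1 from rfl, hvs 0, if_pos (by norm_num), hv0]
    have h2' : v 2 = p₂ (v 1) := by
      rw [show (2:ℕ) = 1+1 from rfl, hvs 1, if_neg (by norm_num)]
    have : p₂ (v 1) = a := by rw [← h2', hv2, hv0]
    have hv1 : v 1 = p₂ a := by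
      rw [← this, hp₂def, partner_invol h₂]
    have : s(a, b) ∈ M₂ := by
      rw [hb, h1.symm.trans hv1]; exact partner_spec h₂ a
    exact hab2 this
  have hk2' : 2 < k := by omega
  have hdiff : ∀ t, ¬(s(v t, v (t+1)) ∈ M₁ ∧ s(v t, v (t+1)) ∈ M₂) := by
    rintro t ⟨hm1, hm2⟩
    have hne : v t ≠ v (t+1) := by
      have := h₁.1 hm1; rw [SimpleGraph.mem_edgeSet] at this; exact this.ne
    have ht2 : v (t+2) = v t := by
      by_cases hp : t % 2 = 0
      · have hv2 : v (t+2) = p₂ (v (t+1)) := by rw [hvs (t+1), if_neg (by omega)]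
        have h := partner_eq h₂ hm2 (Sym2.mem_mk_right (v t) (v (t+1)))
        rw [Sym2.eq_iff] at h
        rcases h with ⟨hc, -⟩ | ⟨hc, -⟩
        · exact absurd hc hne
        · rw [hv2, hp₂def, ← hc]
      · have hv2 : v (t+2) = p₁ (v (t+1)) := by rw [hvs (t+1), if_pos (by omega)]
        have h := partner_eq h₁ hm1 (Sym2.mem_mk_right (v t) (v (t+1)))
        rw [Sym2.eq_iff] at h
        rcases h with ⟨hc, -⟩ | ⟨hc, -⟩
        · exact absurd hc hne
        · rw [hv2, hp₁def, ← hc]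
    have := hperiod t (t+2) (by omega) ht2.symm (by omega)
    omega
  have hvd : ∀ i j, i < j → j < k → v i ≠ v j := by
    have hmeet : ∀ d i j, v i = v j → i % 2 ≠ j % 2 → i + (2*d+1) = j → False := by
      intro d
      induction d with
      | zero =>
        intro i j hv hp hd
        have hj : j = i + 1 := by omega
        subst hj
        rw [hvs i] at hv
        by_cases hi : i % 2 = 0
        · rw [if_pos hi] at hv; exact partner_ne h₁ (v i) hv.symm
        · rw [if_neg hi] at hv; exact partner_ne h₂ (v i) hv.symm
      | succ d ih =>
        intro i j hv hp hd
        have hj1 : 1 ≤ j := by omega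
        have hstep : v (i+1) = v (j-1) := by
          by_cases hi : i % 2 = 0
          · have hjp : (j-1) % 2 = 0 := by omega
            have h1 : v (i+1) = p₁ (v i) := by rw [hvs i, if_pos hi]
            have h2 : v j = p₁ (v (j-1)) := by
              conv_lhs => rw [show j = (j-1)+1 by omega]
              rw [hvs (j-1), if_pos hjp]
            have : v (j-1) = p₁ (v j) := by
              rw [h2, hp₁def, partner_invol h₁]
            rw [this, ← hv, h1]
          · have hjp : ¬((j-1) % 2 = 0) := by omega
            have h1 : v (i+1) = p₂ (v i) := by rw [hvs i, if_neg hi]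
            have h2 : v j = p₂ (v (j-1)) := by
              conv_lhs => rw [show j = (j-1)+1 by omega]
              rw [hvs (j-1), if_neg hjp]
            have : v (j-1) = p₂ (v j) := by
              rw [h2, hp₂def, partner_invol h₂]
            rw [this, ← hv, h1]
        exact ih (i+1) (j-1) hstep (by omega) (by omega)
    intro i j hij hjk hv
    by_cases hp : i % 2 = j % 2
    · have := hperiod i j hij hv hp; omega
    · obtain ⟨d, hd⟩ : ∃ d, i + (2*d+1) = j := ⟨(j - i - 1)/2, by omega⟩
      exact hmeet d i j hv hp hd
  refine ⟨k, v, ⟨hk2', hkpar, hkv, ?_, ?_, hvd⟩, hv0⟩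
  · intro t htk ht
    exact ⟨hstep1 t ht, fun hm => hdiff t ⟨hstep1 t ht, hm⟩⟩
  · intro t htk ht
    exact ⟨hstep2 t ht, fun hm => hdiff t ⟨hm, hstep2 t ht⟩⟩


lemma gc_edge₁ {M₁ M₂ : Set (Sym2 (Fin n))} {k : ℕ} {v : ℕ → Fin n}
    (gc : GoodCycle M₁ M₂ k v) {t : ℕ} (ht : t < k) (hp : t % 2 = 0) :
    s(v t, v (t+1)) ∈ M₁ \ M₂ := gc.2.2.2.1 t ht hp

lemma gc_edge₂ {M₁ M₂ : Set (Sym2 (Fin n))} {k : ℕ} {v : ℕ → Fin n}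
    (gc : GoodCycle M₁ M₂ k v) {t : ℕ} (ht : t < k) (hp : t % 2 = 1) :
    s(v t, v (t+1)) ∈ M₂ \ M₁ := gc.2.2.2.2.1 t ht hp

lemma gc_edge_mem {M₁ M₂ : Set (Sym2 (Fin n))} {k : ℕ} {v : ℕ → Fin n}
    (gc : GoodCycle M₁ M₂ k v) {t : ℕ} (ht : t < k) :
    s(v t, v (t+1)) ∈ M₁ ∪ M₂ := by
  by_cases hp : t % 2 = 0
  · exact Or.inl (gc_edge₁ gc ht hp).1
  · exact Or.inr (gc_edge₂ gc ht (by omega)).1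

lemma gc_edgeSet {M₁ M₂ : Set (Sym2 (Fin n))} {k : ℕ} {v : ℕ → Fin n}
    (h₁ : IsPerfectMatching G M₁) (h₂ : IsPerfectMatching G M₂)
    (gc : GoodCycle M₁ M₂ k v) {t : ℕ} (ht : t < k) :
    s(v t, v (t+1)) ∈ G.edgeSet := by
  rcases gc_edge_mem gc ht with h | h
  · exact h₁.1 h
  · exact h₂.1 h

lemma gc_onCycle {M₁ M₂ : Set (Sym2 (Fin n))} {k : ℕ} {v : ℕ → Fin n}
    (gc : GoodCycle M₁ M₂ k v) {t : ℕ} (ht : t < k) {u : Fin n}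
    (hu : u ∈ s(v t, v (t+1))) : ∃ s, s < k ∧ u = v s := by
  rcases Sym2.mem_iff.mp hu with rfl | rfl
  · exact ⟨t, ht, rfl⟩
  · by_cases h : t + 1 < k
    · exact ⟨t+1, h, rfl⟩
    · have : t + 1 = k := by omega
      exact ⟨0, by omega, by rw [this, gc.2.2.1]⟩

lemma gc_matched₁ {M₁ M₂ : Set (Sym2 (Fin n))} {k : ℕ} {v : ℕ → Fin n}
    (h₁ : IsPerfectMatching G M₁) (gc : GoodCycle M₁ M₂ k v) {t : ℕ} (ht : t < k)
    {f : Sym2 (Fin n)} (hf : f ∈ M₁) (hvf : v t ∈ f) :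
    ∃ s, s < k ∧ f = s(v s, v (s+1)) := by
  obtain ⟨e, -, huniq⟩ := h₁.2 (v t)
  have hfe : f = e := huniq f ⟨hf, hvf⟩
  by_cases hp : t % 2 = 0
  · refine ⟨t, ht, ?_⟩
    rw [hfe, ← huniq _ ⟨(gc_edge₁ gc ht hp).1, by simp⟩]
  · refine ⟨t-1, by omega, ?_⟩
    have h1 : (t-1) % 2 = 0 := by omega
    have h2 : t - 1 + 1 = t := by omega
    have hmem : v t ∈ s(v (t-1), v (t-1+1)) := by rw [h2]; simp
    rw [hfe, ← huniq _ ⟨(gc_edge₁ gc (by omega) h1).1, hmem⟩]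

lemma gc_matched₂ {M₁ M₂ : Set (Sym2 (Fin n))} {k : ℕ} {v : ℕ → Fin n}
    (h₂ : IsPerfectMatching G M₂) (gc : GoodCycle M₁ M₂ k v) {t : ℕ} (ht : t < k)
    {f : Sym2 (Fin n)} (hf : f ∈ M₂) (hvf : v t ∈ f) :
    ∃ s, s < k ∧ f = s(v s, v (s+1)) := by
  obtain ⟨e, -, huniq⟩ := h₂.2 (v t)
  have hfe : f = e := huniq f ⟨hf, hvf⟩
  by_cases hp : t % 2 = 1
  · refine ⟨t, ht, ?_⟩
    rw [hfe, ← huniq _ ⟨(gc_edge₂ gc ht hp).1, by simp⟩]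
  · by_cases ht0 : t = 0
    · refine ⟨k-1, by omega, ?_⟩
      have h1 : (k-1) % 2 = 1 := by have := gc.1; have := gc.2.1; omega
      have h2 : k - 1 + 1 = k := by have := gc.1; omega
      have hmem : v t ∈ s(v (k-1), v (k-1+1)) := by
        rw [h2, gc.2.2.1, ht0]; simp
      rw [hfe, ← huniq _ ⟨(gc_edge₂ gc (by have := gc.1; omega) h1).1, hmem⟩]
    · refine ⟨t-1, by omega, ?_⟩
      have h1 : (t-1) % 2 = 1 := by omega
      have h2 : t - 1 + 1 = t := by omega
      have hmem : v t ∈ s(v (t-1), v (t-1+1)) := by rw [h2]; simp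
      rw [hfe, ← huniq _ ⟨(gc_edge₂ gc (by omega) h1).1, hmem⟩]

lemma gc_edge_inj {M₁ M₂ : Set (Sym2 (Fin n))} {k : ℕ} {v : ℕ → Fin n}
    (gc : GoodCycle M₁ M₂ k v) {i j : ℕ} (hij : i < j) (hjk : j < k) :
    s(v i, v (i+1)) ≠ s(v j, v (j+1)) := by
  have hvd := gc.2.2.2.2.2
  intro heq
  rw [Sym2.eq_iff] at heq
  rcases heq with ⟨h1, -⟩ | ⟨h1, h2⟩
  · exact hvd i j hij hjk h1
  · -- v i = v (j+1), v (i+1) = v j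
    have hj : j = i + 1 := by
      by_contra hne
      exact hvd (i+1) j (by omega) hjk h2
    subst hj
    by_cases hk : i + 2 < k
    · exact hvd i (i+2) (by omega) hk (by rw [h1])
    · have hik : i + 2 = k := by omega
      have : v i = v 0 := by
        rw [h1, show i + 1 + 1 = k by omega, gc.2.2.1]
      have hi0 : i = 0 := by
        by_contra hne
        exact hvd 0 i (by omega) (by omega) this.symm
      have := gc.1; omega

lemma tight_unique {F : Set (Sym2 (Fin n) → ℝ)} {S : Finset (Fin n)}
    {M : Set (Sym2 (Fin n))} (hS : S ∈ tightSets G F) (hMF : indic M ∈ F) :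
    ∃! e, e ∈ cut G S ∧ e ∈ M := by
  classical
  have h := hS.2 (indic M) hMF
  have hcard :
      ((Finset.univ.filter (fun e : Sym2 (Fin n) => e ∈ cut G S ∧ e ∈ M)).card : ℝ) = 1 := by
    rw [← h, dotR, Finset.card_filter]
    push_cast
    apply Finset.sum_congr rfl
    intro e _
    by_cases h1 : e ∈ cut G S <;> by_cases h2 : e ∈ M <;>
      simp [cutInd, indic, h1, h2]
  have hcard' : (Finset.univ.filter
      (fun e : Sym2 (Fin n) => e ∈ cut G S ∧ e ∈ M)).card = 1 := by
    exact_mod_cast hcard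
  obtain ⟨e, he⟩ := Finset.card_eq_one.mp hcard'
  refine ⟨e, ?_, ?_⟩
  · have : e ∈ Finset.univ.filter (fun e : Sym2 (Fin n) => e ∈ cut G S ∧ e ∈ M) := by
      rw [he]; exact Finset.mem_singleton_self e
    simpa using this
  · intro f hf
    have : f ∈ Finset.univ.filter (fun e : Sym2 (Fin n) => e ∈ cut G S ∧ e ∈ M) := by
      simpa using hf
    rw [he] at this; simpa using this

lemma face_subset_poly {F : Set (Sym2 (Fin n) → ℝ)} (hF : IsFace G F) : F ⊆ PMpoly G := by
  obtain ⟨-, w, rfl⟩ := hF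
  exact fun x hx => hx.1

lemma mem_PMpoly_of_pm {M : Set (Sym2 (Fin n))} (hM : IsPerfectMatching G M) :
    indic M ∈ PMpoly G :=
  subset_convexHull ℝ _ ⟨M, hM, rfl⟩

lemma dotR_add_eq {w x₁ x₂ y₁ y₂ : Sym2 (Fin n) → ℝ}
    (h : ∀ e, x₁ e + x₂ e = y₁ e + y₂ e) :
    dotR w x₁ + dotR w x₂ = dotR w y₁ + dotR w y₂ := by
  rw [dotR, dotR, dotR, dotR, ← Finset.sum_add_distrib, ← Finset.sum_add_distrib]
  apply Finset.sum_congr rfl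
  intro e _
  rw [← mul_add, ← mul_add, h e]

lemma face_two {F : Set (Sym2 (Fin n) → ℝ)} (hF : IsFace G F)
    {x₁ x₂ y₁ y₂ : Sym2 (Fin n) → ℝ} (hx₁ : x₁ ∈ F) (hx₂ : x₂ ∈ F)
    (hy₁ : y₁ ∈ PMpoly G) (hy₂ : y₂ ∈ PMpoly G)
    (h : ∀ e, x₁ e + x₂ e = y₁ e + y₂ e) : y₁ ∈ F := by
  obtain ⟨-, w, rfl⟩ := hF
  obtain ⟨hx₁p, hx₁min⟩ := hx₁
  obtain ⟨hx₂p, hx₂min⟩ := hx₂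
  have e12 : dotR w x₁ = dotR w x₂ := le_antisymm (hx₁min x₂ hx₂p) (hx₂min x₁ hx₁p)
  have h1 : dotR w x₁ ≤ dotR w y₁ := hx₁min y₁ hy₁
  have h2 : dotR w x₁ ≤ dotR w y₂ := hx₁min y₂ hy₂
  have hsum := dotR_add_eq (w := w) h
  have hy1 : dotR w y₁ = dotR w x₁ := by linarith
  exact ⟨hy₁, fun z hz => by rw [hy1]; exact hx₁min z hz⟩

lemma face_decomp {F : Set (Sym2 (Fin n) → ℝ)} (hF : IsFace G F) {x : Sym2 (Fin n) → ℝ}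
    (hx : x ∈ F) :
    ∃ (ι : Type) (t : Finset ι) (c : ι → ℝ) (z : ι → Sym2 (Fin n) → ℝ),
      (∀ i ∈ t, 0 < c i) ∧ (∑ i ∈ t, c i) = 1 ∧
      (∀ i ∈ t, (∃ M, IsPerfectMatching G M ∧ z i = indic M) ∧ z i ∈ F) ∧
      (∀ e, x e = ∑ i ∈ t, c i * z i e) := by
  classical
  obtain ⟨-, w, hFw⟩ := hF
  have hx' := hx
  rw [hFw] at hx'
  obtain ⟨hxp, hxmin⟩ := hx'
  rw [PMpoly, convexHull_eq] at hxp
  obtain ⟨ι, t, c, z, hc0, hc1, hz, hcm⟩ := hxp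
  have hxs : ∀ e, x e = ∑ i ∈ t, c i * z i e := by
    intro e
    rw [← hcm, Finset.centerMass_eq_of_sum_1 _ _ hc1]
    rw [Finset.sum_apply]
    apply Finset.sum_congr rfl
    intro i _
    simp
  set t' := t.filter (fun i => 0 < c i) with ht'
  have hsub : t' ⊆ t := Finset.filter_subset _ _
  have hzero : ∀ i ∈ t, i ∉ t' → c i = 0 := by
    intro i hi hni
    have : ¬ 0 < c i := by
      intro h; exact hni (Finset.mem_filter.mpr ⟨hi, h⟩)
    have := hc0 i hi
    linarith
  have hc1' : (∑ i ∈ t', c i) = 1 := by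
    rw [← hc1]
    exact Finset.sum_subset hsub (fun i hi hni => hzero i hi hni)
  have hxs' : ∀ e, x e = ∑ i ∈ t', c i * z i e := by
    intro e
    rw [hxs e]
    exact (Finset.sum_subset hsub (fun i hi hni => by rw [hzero i hi hni, zero_mul])).symm
  have hzp : ∀ i ∈ t', z i ∈ PMpoly G := by
    intro i hi
    exact subset_convexHull ℝ _ (hz i (hsub hi))
  have hdot : dotR w x = ∑ i ∈ t', c i * dotR w (z i) := by
    rw [dotR]
    have hterm : ∀ e : Sym2 (Fin n), w e * x e = ∑ i ∈ t', c i * (w e * z i e) := by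
      intro e
      rw [hxs' e, Finset.mul_sum]
      apply Finset.sum_congr rfl
      intro i _; ring
    rw [Finset.sum_congr rfl (fun e _ => hterm e), Finset.sum_comm]
    apply Finset.sum_congr rfl
    intro i _
    rw [dotR, Finset.mul_sum]
  have hge : ∀ i ∈ t', dotR w x ≤ dotR w (z i) := fun i hi => hxmin (z i) (hzp i hi)
  have hzmin : ∀ i ∈ t', dotR w (z i) = dotR w x := by
    have hzero' : ∀ i ∈ t', c i * (dotR w (z i) - dotR w x) = 0 := by
      rw [← Finset.sum_eq_zero_iff_of_nonneg]
      · have : (∑ i ∈ t', c i * (dotR w (z i) - dotR w x)) =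
            (∑ i ∈ t', c i * dotR w (z i)) - (∑ i ∈ t', c i) * dotR w x := by
          simp only [mul_sub, Finset.sum_sub_distrib, Finset.sum_mul]
        rw [this, hc1', ← hdot]; ring
      · intro i hi
        have h1 := (Finset.mem_filter.mp hi).2
        have h2 := hge i hi
        nlinarith
    intro i hi
    have h1 := hzero' i hi
    have h2 := (Finset.mem_filter.mp hi).2
    have h3 : dotR w (z i) - dotR w x = 0 := by
      rcases mul_eq_zero.mp h1 with h | h
      · linarith
      · exact h
    linarith
  refine ⟨ι, t', c, z, fun i hi => (Finset.mem_filter.mp hi).2, hc1', ?_, hxs'⟩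
  intro i hi
  refine ⟨hz i (hsub hi), ?_⟩
  rw [hFw]
  exact ⟨hzp i hi, fun y hy => by rw [hzmin i hi]; exact hxmin y hy⟩


/-- The edge is inside a contracted vertex. -/
def InsideCV (L : Set (Finset (Fin n))) (lam : ℕ) (e : Sym2 (Fin n)) : Prop :=
  ∃ S ∈ contrVerts L lam, ∀ u ∈ e, u ∈ S

lemma supp_of_mem {F : Set (Sym2 (Fin n) → ℝ)} {M : Set (Sym2 (Fin n))}
    (hMF : indic M ∈ F) {e : Sym2 (Fin n)} (he : e ∈ M) : e ∈ faceSupp F :=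
  ⟨indic M, hMF, by rw [indic]; simp [he]⟩

lemma cv_disjoint {L : Set (Finset (Fin n))} (hLam : Laminar L) {lam : ℕ}
    {S T : Finset (Fin n)} (hS : S ∈ contrVerts L lam) (hT : T ∈ contrVerts L lam)
    {x : Fin n} (hxS : x ∈ S) (hxT : x ∈ T) : S = T := by
  have hcr := hLam S hS.1 T hT.1
  have hST : (S ∩ T).Nonempty := ⟨x, Finset.mem_inter.mpr ⟨hxS, hxT⟩⟩
  by_cases h1 : (S \ T).Nonempty
  · by_cases h2 : (T \ S).Nonempty
    · exact absurd ⟨hST, h1, h2⟩ hcr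
    · have hTS : T ⊆ S := by
        intro y hy; by_contra hns
        exact h2 ⟨y, Finset.mem_sdiff.mpr ⟨hy, hns⟩⟩
      exact (hT.2.2 S hS.1 hS.2.1 hTS).symm
  · have hST' : S ⊆ T := by
      intro y hy; by_contra hns
      exact h1 ⟨y, Finset.mem_sdiff.mpr ⟨hy, hns⟩⟩
    exact hS.2.2 T hT.1 hT.2.1 hST'

lemma classWeight_of_mem {L : Set (Finset (Fin n))} (hLam : Laminar L) {lam : ℕ}
    {S : Finset (Fin n)} (hS : S ∈ contrVerts L lam) (hSpos : 0 < S.card)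
    {x : Fin n} (hx : x ∈ S) : classWeight L lam x = S.card := by
  have hset : {m : ℕ | ∃ T ∈ contrVerts L lam, x ∈ T ∧ T.card = m} = {S.card} := by
    ext m
    constructor
    · rintro ⟨T, hT, hxT, rfl⟩
      exact congrArg Finset.card (cv_disjoint hLam hT hS hxT hx)
    · rintro rfl
      exact ⟨S, hS, hx, rfl⟩
  rw [classWeight, hset, csSup_singleton]
  omega

lemma classWeight_of_notMem {L : Set (Finset (Fin n))} {lam : ℕ} {x : Fin n}
    (h : ∀ S ∈ contrVerts L lam, x ∉ S) : classWeight L lam x = 1 := by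
  have hset : {m : ℕ | ∃ T ∈ contrVerts L lam, x ∈ T ∧ T.card = m} = ∅ := by
    ext m
    simp only [Set.mem_empty_iff_false, iff_false]
    rintro ⟨T, hT, hxT, -⟩
    exact h T hT hxT
  rw [classWeight, hset, csSup_empty]
  simp

lemma sum_card_le {m : ℕ} {A : ℕ → Finset (Fin n)}
    (hdisj : ∀ i j, i < m → j < m → i ≠ j → Disjoint (A i) (A j)) :
    (∑ i ∈ Finset.range m, (A i).card) ≤ n := by
  classical
  rw [← Finset.card_biUnion (fun x hx y hy hxy =>
    hdisj x y (Finset.mem_range.mp hx) (Finset.mem_range.mp hy) hxy)]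
  calc ((Finset.range m).biUnion A).card ≤ (Finset.univ : Finset (Fin n)).card :=
        Finset.card_le_univ _
    _ = n := by simp

lemma all_inside_same {L : Set (Finset (Fin n))} (hLam : Laminar L) {lam : ℕ}
    {k : ℕ} {v : ℕ → Fin n} (hk : 0 < k)
    (hall : ∀ t, t < k → InsideCV L lam (s(v t, v (t+1)))) :
    ∃ S ∈ contrVerts L lam, ∀ t, t < k → ∀ u ∈ s(v t, v (t+1)), u ∈ S := by
  obtain ⟨S, hS, hS0⟩ := hall 0 hk
  refine ⟨S, hS, ?_⟩
  intro t
  induction t with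
  | zero => exact fun _ => hS0
  | succ t ih =>
    intro htk u hu
    have ht : t < k := by omega
    obtain ⟨S', hS', hS'mem⟩ := hall (t+1) htk
    have hshared : v (t+1) ∈ S := ih ht _ (Sym2.mem_mk_right _ _)
    have hshared' : v (t+1) ∈ S' := hS'mem _ (Sym2.mem_mk_left _ _)
    rw [← cv_disjoint hLam hS' hS hshared' hshared]
    exact hS'mem u hu

lemma caseA {F : Set (Sym2 (Fin n) → ℝ)} {L : Set (Finset (Fin n))} {lam : ℕ}
    {M₁ M₂ : Set (Sym2 (Fin n))} {k : ℕ} {v : ℕ → Fin n}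
    (hF : IsFace G F) (hgood : LambdaGood G F L lam)
    (h₁ : IsPerfectMatching G M₁) (h₂ : IsPerfectMatching G M₂)
    (hM₁F : indic M₁ ∈ F) (hM₂F : indic M₂ ∈ F)
    (gc : GoodCycle M₁ M₂ k v)
    {S : Finset (Fin n)} (hS : S ∈ contrVerts L lam)
    (hall : ∀ t, t < k → ∀ u ∈ s(v t, v (t+1)), u ∈ S) : False := by
  classical
  set C : Set (Sym2 (Fin n)) := {e | ∃ t, t < k ∧ e = s(v t, v (t+1))} with hCdef
  have hk0 : 0 < k := by have := gc.1; omega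
  have hAB : ∀ e ∈ C, e ∈ M₁ ↔ e ∉ M₂ := by
    rintro e ⟨t, htk, rfl⟩
    by_cases hp : t % 2 = 0
    · have h := gc_edge₁ gc htk hp
      exact ⟨fun _ => h.2, fun _ => h.1⟩
    · have h := gc_edge₂ gc htk (by omega)
      exact iff_of_false h.2 (fun hc => hc h.1)
  have hAB' : ∀ e ∈ C, e ∈ M₂ ↔ e ∉ M₁ := by
    intro e he
    have := hAB e he
    tauto
  have hcA : ∀ u, (∃ e ∈ C, u ∈ e) → ∀ f ∈ M₁, u ∈ f → f ∈ C := by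
    rintro u ⟨e, ⟨t, htk, rfl⟩, hu⟩ f hf huf
    obtain ⟨s, hs, rfl⟩ := gc_onCycle gc htk hu
    obtain ⟨s', hs', hfs⟩ := gc_matched₁ h₁ gc hs hf huf
    exact ⟨s', hs', hfs⟩
  have hcB : ∀ u, (∃ e ∈ C, u ∈ e) → ∀ f ∈ M₂, u ∈ f → f ∈ C := by
    rintro u ⟨e, ⟨t, htk, rfl⟩, hu⟩ f hf huf
    obtain ⟨s, hs, rfl⟩ := gc_onCycle gc htk hu
    obtain ⟨s', hs', hfs⟩ := gc_matched₂ h₂ gc hs hf huf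
    exact ⟨s', hs', hfs⟩
  have hM₃ : IsPerfectMatching G ((M₁ \ C) ∪ (C \ M₁)) := swap_pm_s11 h₁ h₂ hAB hcA hcB
  have hM₄ : IsPerfectMatching G ((M₂ \ C) ∪ (C \ M₂)) := swap_pm_s11 h₂ h₁ hAB' hcB hcA
  set M₃ := (M₁ \ C) ∪ (C \ M₁) with hM₃def
  set M₄ := (M₂ \ C) ∪ (C \ M₂) with hM₄def
  have hM₃mem : ∀ e, e ∈ M₃ ↔ ((e ∈ M₁ ∧ e ∉ C) ∨ (e ∈ C ∧ e ∉ M₁)) := by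
    intro e; rw [hM₃def]; rfl
  have hM₄mem : ∀ e, e ∈ M₄ ↔ ((e ∈ M₂ ∧ e ∉ C) ∨ (e ∈ C ∧ e ∉ M₂)) := by
    intro e; rw [hM₄def]; rfl
  have hsum : ∀ e, indic M₁ e + indic M₂ e = indic M₃ e + indic M₄ e := by
    intro e
    by_cases heC : e ∈ C
    · by_cases h1 : e ∈ M₁
      · have h2 : e ∉ M₂ := (hAB e heC).mp h1
        have h3 : e ∉ M₃ := by rw [hM₃mem]; tauto
        have h4 : e ∈ M₄ := by rw [hM₄mem]; tauto
        simp [indic, h1, h2, h3, h4]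
      · have h2 : e ∈ M₂ := by by_contra hc; exact h1 ((hAB e heC).mpr hc)
        have h3 : e ∈ M₃ := by rw [hM₃mem]; tauto
        have h4 : e ∉ M₄ := by rw [hM₄mem]; tauto
        simp [indic, h1, h2, h3, h4]
    · have h3 : e ∈ M₃ ↔ e ∈ M₁ := by rw [hM₃mem]; tauto
      have h4 : e ∈ M₄ ↔ e ∈ M₂ := by rw [hM₄mem]; tauto
      by_cases h1 : e ∈ M₁ <;> by_cases h2 : e ∈ M₂ <;>
        simp [indic, h1, h2, h3, h4]
  have hM₃F : indic M₃ ∈ F :=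
    face_two hF hM₁F hM₂F (mem_PMpoly_of_pm hM₃) (mem_PMpoly_of_pm hM₄) hsum
  have hStight : S ∈ tightSets G F := hgood.1.1 hS.1
  obtain ⟨f, ⟨hfcut, hfM₁⟩, -⟩ := tight_unique hStight hM₁F
  have hfC : f ∉ C := by
    rintro ⟨t, htk, rfl⟩
    obtain ⟨-, u', w', hfe, hu', hw'⟩ := hfcut
    apply hw'
    apply hall t htk
    rw [hfe]
    exact Sym2.mem_mk_right u' w'
  have hfM₃ : f ∈ M₃ := by rw [hM₃mem]; exact Or.inl ⟨hfM₁, hfC⟩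
  have hcontr := hgood.2.1 S hS.1 hS.2.1 f hfcut M₁ M₃ h₁ hM₃ hM₁F hM₃F hfM₁ hfM₃
  have hE0M₁ : s(v 0, v (0+1)) ∈ M₁ := (gc_edge₁ gc hk0 (by norm_num)).1
  have hE0in : s(v 0, v (0+1)) ∈ insideEdges G S :=
    ⟨gc_edgeSet h₁ h₂ gc hk0, fun u hu => hall 0 hk0 u hu⟩
  have hE0M₃ : s(v 0, v (0+1)) ∈ M₃ := by
    have : s(v 0, v (0+1)) ∈ M₁ ∩ insideEdges G S := ⟨hE0M₁, hE0in⟩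
    rw [hcontr] at this
    exact this.1
  rw [hM₃mem] at hE0M₃
  rcases hE0M₃ with ⟨-, hc⟩ | ⟨-, hc⟩
  · exact hc ⟨0, hk0, rfl⟩
  · exact hc hE0M₁


lemma caseB {F : Set (Sym2 (Fin n) → ℝ)} {L : Set (Finset (Fin n))} {lam : ℕ}
    {M₁ M₂ : Set (Sym2 (Fin n))} {k : ℕ} {v : ℕ → Fin n}
    (hn : n ≤ lam)
    (hgood : LambdaGood G F L lam)
    (h₁ : IsPerfectMatching G M₁) (h₂ : IsPerfectMatching G M₂)
    (hM₁F : indic M₁ ∈ F) (hM₂F : indic M₂ ∈ F)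
    (gc : GoodCycle M₁ M₂ k v)
    (h0 : ¬ InsideCV L lam (s(v 0, v (0+1)))) : False := by
  classical
  have hLam : Laminar L := hgood.1.2.1
  have hLsub := hgood.1.1
  have hk2 : 2 < k := gc.1
  have hkpar : k % 2 = 0 := gc.2.1
  have hret : v k = v 0 := gc.2.2.1
  have hvd := gc.2.2.2.2.2
  have hEinj : ∀ i j, i < k → j < k → s(v i, v (i+1)) = s(v j, v (j+1)) → i = j := by
    intro i j hi hj he
    rcases lt_trichotomy i j with h | h | h
    · exact absurd he (gc_edge_inj gc h hj)
    · exact h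
    · exact absurd he.symm (gc_edge_inj gc h hi)
  have htight1 : ∀ (S : Finset (Fin n)), S ∈ L → ∀ e f, e ∈ cut G S → f ∈ cut G S →
      e ∈ M₁ → f ∈ M₁ → e = f := by
    intro S hSL e f he hf he1 hf1
    obtain ⟨g, -, hg⟩ := tight_unique (hLsub hSL) hM₁F
    rw [hg e ⟨he, he1⟩, hg f ⟨hf, hf1⟩]
  have htight2 : ∀ (S : Finset (Fin n)), S ∈ L → ∀ e f, e ∈ cut G S → f ∈ cut G S →
      e ∈ M₂ → f ∈ M₂ → e = f := by
    intro S hSL e f he hf he1 hf1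
    obtain ⟨g, -, hg⟩ := tight_unique (hLsub hSL) hM₂F
    rw [hg e ⟨he, he1⟩, hg f ⟨hf, hf1⟩]
  -- the set of contraction-edge indices
  set T : Finset ℕ :=
    (Finset.range k).filter (fun t => ¬ InsideCV L lam (s(v t, v (t+1)))) with hTdef
  have h0T : 0 ∈ T := Finset.mem_filter.mpr ⟨Finset.mem_range.mpr (by omega), h0⟩
  set m : ℕ := T.card with hmdef
  have hm : 0 < m := Finset.card_pos.mpr ⟨0, h0T⟩
  set o := T.orderIsoOfFin rfl with hodef
  set tt : ℕ → ℕ := fun i => if h : i < m then ((o ⟨i, h⟩ : ℕ)) else 0 with httdef0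
  have httdef : ∀ i (h : i < m), tt i = (o ⟨i, h⟩ : ℕ) := fun i h => dif_pos h
  have htT : ∀ i, i < m → tt i ∈ T := by
    intro i h
    rw [httdef i h]
    exact (o ⟨i, h⟩).2
  have httk : ∀ i, i < m → tt i < k := by
    intro i h
    have := htT i h
    rw [hTdef, Finset.mem_filter, Finset.mem_range] at this
    exact this.1
  have htnin : ∀ i, i < m → ¬ InsideCV L lam (s(v (tt i), v (tt i + 1))) := by
    intro i h
    have := htT i h
    rw [hTdef, Finset.mem_filter] at this
    exact this.2
  have htlt : ∀ i j, i < m → j < m → (i < j ↔ tt i < tt j) := by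
    intro i j hi hj
    rw [httdef i hi, httdef j hj]
    constructor
    · intro h
      exact Subtype.coe_lt_coe.mpr (o.lt_iff_lt.mpr (Fin.mk_lt_mk.mpr h))
    · intro h
      exact Fin.mk_lt_mk.mp (o.lt_iff_lt.mp (Subtype.coe_lt_coe.mp h))
  have hsurj : ∀ u, u ∈ T → ∃ i, i < m ∧ tt i = u := by
    intro u hu
    obtain ⟨j, hj⟩ := o.surjective ⟨u, hu⟩
    refine ⟨j.1, j.2, ?_⟩
    rw [httdef j.1 j.2, Fin.eta]
    exact congrArg Subtype.val hj
  have ht0 : tt 0 = 0 := by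
    obtain ⟨j, hj, hjv⟩ := hsurj 0 h0T
    rcases Nat.eq_zero_or_pos j with rfl | hjpos
    · exact hjv
    · have := (htlt 0 j hm hj).mp hjpos
      omega
  have hgapT : ∀ i, i + 1 < m → ∀ u, tt i < u → u < tt (i+1) →
      InsideCV L lam (s(v u, v (u+1))) := by
    intro i hi1 u hu1 hu2
    by_contra hni
    have huk : u < k := lt_trans hu2 (httk (i+1) hi1)
    have huT : u ∈ T := Finset.mem_filter.mpr ⟨Finset.mem_range.mpr huk, hni⟩
    obtain ⟨j, hj, hjv⟩ := hsurj u huT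
    have h1 : i < j := (htlt i j (by omega) hj).mpr (by omega)
    have h2 : j < i + 1 := (htlt j (i+1) hj hi1).mpr (by omega)
    omega
  have hlastT : ∀ u, tt (m-1) < u → u < k → InsideCV L lam (s(v u, v (u+1))) := by
    intro u hu1 hu2
    by_contra hni
    have huT : u ∈ T := Finset.mem_filter.mpr ⟨Finset.mem_range.mpr hu2, hni⟩
    obtain ⟨j, hj, hjv⟩ := hsurj u huT
    rcases Nat.lt_or_ge j (m-1) with h | h
    · have := (htlt j (m-1) hj (by omega)).mp h
      omega
    · have hjm : j = m - 1 := by omega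
      subst hjm
      omega
  -- THE GAP LEMMA
  have gaplem : ∀ s d, s < k → 0 < d → s + d ≤ k →
      (¬ InsideCV L lam (s(v s, v (s+1)))) →
      (¬ InsideCV L lam (s(v ((s+d) % k), v ((s+d) % k + 1)))) →
      (∀ u, s < u → u < s + d → InsideCV L lam (s(v u, v (u+1)))) →
      d % 2 = 1 ∧ sameClass L lam (v (s+1)) (v (s+d)) := by
    intro s d hsk hd0 hsd hns hnd hmid
    by_cases hd1 : d = 1
    · subst hd1; exact ⟨rfl, Or.inl rfl⟩
    have hd2 : 2 ≤ d := by omega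
    obtain ⟨S, hS, hSfirst⟩ := hmid (s+1) (by omega) (by omega)
    have hstepS : ∀ j, s + 1 + j < s + d → ∀ x ∈ s(v (s+1+j), v (s+1+j+1)), x ∈ S := by
      intro j
      induction j with
      | zero => intro hj x hx; exact hSfirst x hx
      | succ j ih =>
        intro hj x hx
        obtain ⟨S', hS', hS'mem⟩ := hmid (s+1+(j+1)) (by omega) (by omega)
        have hshared : v (s+1+j+1) ∈ S := ih (by omega) _ (Sym2.mem_mk_right _ _)
        have hshared' : v (s+1+j+1) ∈ S' := hS'mem _ (Sym2.mem_mk_left _ _)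
        have heq : S' = S := cv_disjoint hLam hS' hS hshared' hshared
        rw [← heq]
        exact hS'mem x hx
    have hSmid : ∀ u, s < u → u < s + d → ∀ x ∈ s(v u, v (u+1)), x ∈ S := by
      intro u hu1 hu2
      have hu : u = s + 1 + (u - s - 1) := by omega
      rw [hu]
      exact hstepS (u - s - 1) (by omega)
    have hv1S : v (s+1) ∈ S := hSmid (s+1) (by omega) (by omega) _ (Sym2.mem_mk_left _ _)
    have hvdS : v (s+d) ∈ S := by
      have h := hSmid (s+d-1) (by omega) (by omega) (v (s+d-1+1)) (Sym2.mem_mk_right _ _)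
      rw [show s+d-1+1 = s+d by omega] at h
      exact h
    refine ⟨?_, Or.inr ⟨S, hS, hv1S, hvdS⟩⟩
    by_contra hpar
    have hdeven : d % 2 = 0 := by omega
    have hvsnot : v s ∉ S := by
      intro hc
      refine hns ⟨S, hS, ?_⟩
      intro x hx
      rcases Sym2.mem_iff.mp hx with rfl | rfl
      exacts [hc, hv1S]
    set t' := (s + d) % k with ht'def
    have ht'k : t' < k := Nat.mod_lt _ (by omega)
    have hvt' : v t' = v (s+d) := by
      rcases Nat.lt_or_ge (s+d) k with h | h
      · rw [ht'def, Nat.mod_eq_of_lt h]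
      · have hh : s + d = k := by omega
        rw [ht'def, hh, Nat.mod_self, hret]
    have hvt'S : v t' ∈ S := by rw [hvt']; exact hvdS
    have hvt'2 : v (t' + 1) ∉ S := by
      intro hc
      refine hnd ⟨S, hS, ?_⟩
      intro x hx
      rcases Sym2.mem_iff.mp hx with rfl | rfl
      exacts [hvt'S, hc]
    have hcut1 : s(v s, v (s+1)) ∈ cut G S :=
      ⟨gc_edgeSet h₁ h₂ gc hsk, v (s+1), v s, Sym2.eq_swap, hv1S, hvsnot⟩
    have hcut2 : s(v t', v (t'+1)) ∈ cut G S :=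
      ⟨gc_edgeSet h₁ h₂ gc ht'k, v t', v (t'+1), rfl, hvt'S, hvt'2⟩
    have hne : s(v s, v (s+1)) ≠ s(v t', v (t'+1)) := by
      intro he
      have h := hEinj s t' hsk ht'k he
      rw [← h] at hvt'S
      exact hvsnot hvt'S
    have ht'par : t' % 2 = s % 2 := by
      rcases Nat.lt_or_ge (s+d) k with h | h
      · rw [ht'def, Nat.mod_eq_of_lt h]; omega
      · have hh : s + d = k := by omega
        rw [ht'def, hh, Nat.mod_self]; omega
    by_cases hsp : s % 2 = 0
    · exact hne (htight1 S hS.1 _ _ hcut1 hcut2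
        (gc_edge₁ gc hsk hsp).1 (gc_edge₁ gc ht'k (by omega)).1)
    · exact hne (htight2 S hS.1 _ _ hcut1 hcut2
        (gc_edge₂ gc hsk (by omega)).1 (gc_edge₂ gc ht'k (by omega)).1)
  -- parity of the selected indices
  have htpar : ∀ i, i < m → tt i % 2 = i % 2 := by
    intro i
    induction i with
    | zero => intro _; rw [ht0]
    | succ i ih =>
      intro hi1
      have hi : i < m := by omega
      have hlt : tt i < tt (i+1) := (htlt i (i+1) hi hi1).mp (by omega)
      have hik := httk i hi
      have hi1k := httk (i+1) hi1
      have h1 := gaplem (tt i) (tt (i+1) - tt i) hik (by omega) (by omega)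
        (htnin i hi)
        (by
          have heq : (tt i + (tt (i+1) - tt i)) % k = tt (i+1) := by
            rw [show tt i + (tt (i+1) - tt i) = tt (i+1) by omega, Nat.mod_eq_of_lt hi1k]
          rw [heq]
          exact htnin (i+1) hi1)
        (fun u hu1 hu2 => hgapT i hi1 u hu1 (by omega))
      have h2 := ih hi
      have h3 := h1.1
      omega
  have hm1 : m - 1 < m := by omega
  have hm1k := httk (m-1) hm1
  have hlastgap := gaplem (tt (m-1)) (k - tt (m-1)) hm1k (by omega) (by omega)
    (htnin (m-1) hm1)
    (by
      have heq : (tt (m-1) + (k - tt (m-1))) % k = 0 := by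
        rw [show tt (m-1) + (k - tt (m-1)) = k by omega, Nat.mod_self]
      rw [heq]
      exact h0)
    (fun u hu1 hu2 => hlastT u hu1 (by omega))
  have hmeven : m % 2 = 0 := by
    have h1 := hlastgap.1
    have h2 := htpar (m-1) hm1
    omega
  -- the circuit
  set CC : ℕ → Fin n × Fin n := fun i => (v (tt i), v (tt i + 1)) with hCCdef
  have hcirc : IsAltCircuit G F L lam m CC := by
    refine ⟨hm, Nat.even_iff.mpr hmeven, ?_, ?_, ?_⟩
    · intro i hi
      refine ⟨?_, ?_, ?_⟩
      · rcases gc_edge_mem gc (httk i hi) with h | h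
        · exact supp_of_mem hM₁F h
        · exact supp_of_mem hM₂F h
      · intro T' hT' hcard
        have : T'.card ≤ n := le_trans (Finset.card_le_univ T') (by simp)
        omega
      · intro S hS hallS
        exact htnin i hi ⟨S, hS, hallS⟩
    · intro i hi
      by_cases hi1 : i + 1 < m
      · have hik := httk i hi
        have hi1k := httk (i+1) hi1
        have hlt : tt i < tt (i+1) := (htlt i (i+1) hi hi1).mp (by omega)
        have h1 := (gaplem (tt i) (tt (i+1) - tt i) hik (by omega) (by omega)
          (htnin i hi)
          (by
            have heq : (tt i + (tt (i+1) - tt i)) % k = tt (i+1) := by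
              rw [show tt i + (tt (i+1) - tt i) = tt (i+1) by omega, Nat.mod_eq_of_lt hi1k]
            rw [heq]
            exact htnin (i+1) hi1)
          (fun u hu1 hu2 => hgapT i hi1 u hu1 (by omega))).2
        rw [show tt i + (tt (i+1) - tt i) = tt (i+1) by omega] at h1
        show sameClass L lam (v (tt i + 1)) (v (tt ((i+1) % m)))
        rw [Nat.mod_eq_of_lt hi1]
        exact h1
      · have him : i = m - 1 := by omega
        have h1 := hlastgap.2
        rw [show tt (m-1) + (k - tt (m-1)) = k by omega, hret] at h1
        show sameClass L lam (v (tt i + 1)) (v (tt ((i+1) % m)))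
        rw [show (i+1) % m = 0 by rw [show i+1 = m by omega, Nat.mod_self], ht0, him]
        exact h1
    · intro hzero
      have h := congrFun hzero (s(v 0, v (0+1)))
      rw [altInd] at h
      have hval : (∑ i ∈ Finset.range m,
          if s((CC i).1, (CC i).2) = s(v 0, v (0+1)) then ((-1:ℤ)) ^ i else 0) = 1 := by
        rw [Finset.sum_eq_single_of_mem 0 (Finset.mem_range.mpr hm)]
        · rw [if_pos (by rw [hCCdef]; simp only []; rw [ht0])]
          norm_num
        · intro b hb hb0
          rw [if_neg]
          rw [hCCdef]; simp only []
          intro he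
          have hbm := Finset.mem_range.mp hb
          have := hEinj (tt b) 0 (httk b hbm) (by omega) (by
            have h00 : tt 0 = 0 := ht0
            exact he)
          have h0lt : tt 0 < tt b := (htlt 0 b hm hbm).mp (by omega)
          omega
      rw [hval] at h
      norm_num at h
  -- the weight bound
  have houtuniq : ∀ S, S ∈ contrVerts L lam → ∀ i j, i < m → j < m →
      v (tt i) ∈ S → v (tt j) ∈ S → i = j := by
    intro S hS i j hi hj hviS hvjS
    by_contra hij
    have hout : ∀ a, a < m → v (tt a) ∈ S →
        s(v (tt a), v (tt a + 1)) ∈ cut G S ∧ v (tt a + 1) ∉ S := by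
      intro a ha hvaS
      have h2 : v (tt a + 1) ∉ S := by
        intro hc
        refine htnin a ha ⟨S, hS, ?_⟩
        intro x hx
        rcases Sym2.mem_iff.mp hx with rfl | rfl
        exacts [hvaS, hc]
      exact ⟨⟨gc_edgeSet h₁ h₂ gc (httk a ha), v (tt a), v (tt a + 1), rfl, hvaS, h2⟩, h2⟩
    have hSL : S ∈ L := hS.1
    have htine : tt i ≠ tt j := by
      intro h
      rcases lt_trichotomy i j with hc | hc | hc
      · have := (htlt i j hi hj).mp hc; omega
      · exact hij hc
      · have := (htlt j i hj hi).mp hc; omega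
    have hpardiff : tt i % 2 ≠ tt j % 2 := by
      intro hpeq
      have hci := (hout i hi hviS).1
      have hcj := (hout j hj hvjS).1
      have hnee : s(v (tt i), v (tt i + 1)) ≠ s(v (tt j), v (tt j + 1)) := by
        intro he; exact htine (hEinj _ _ (httk i hi) (httk j hj) he)
      by_cases hp : tt i % 2 = 0
      · exact hnee (htight1 S hSL _ _ hci hcj (gc_edge₁ gc (httk i hi) hp).1
          (gc_edge₁ gc (httk j hj) (by omega)).1)
      · exact hnee (htight2 S hSL _ _ hci hcj (gc_edge₂ gc (httk i hi) (by omega)).1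
          (gc_edge₂ gc (httk j hj) (by omega)).1)
    set χ : ℕ → ℤ := fun t => if v t ∈ S then 1 else 0 with hχdef
    have htel : (∑ t ∈ Finset.range k, (χ (t+1) - χ t)) = 0 := by
      rw [Finset.sum_range_sub χ k, hχdef]
      simp only [hret]
      ring
    have hterm : ∀ t ∈ Finset.range k,
        χ (t+1) - χ t = (if t = tt i then (-1:ℤ) else 0) + (if t = tt j then (-1:ℤ) else 0) := by
      intro t htmem'
      have htk' : t < k := Finset.mem_range.mp htmem'
      by_cases hti : t = tt i
      · subst hti
        rw [if_pos rfl, if_neg htine]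
        have hh := hout i hi hviS
        rw [hχdef]
        simp only [if_neg hh.2, if_pos hviS]
        ring
      · by_cases htj : t = tt j
        · subst htj
          rw [if_neg (fun hc => htine hc.symm), if_pos rfl]
          have hh := hout j hj hvjS
          rw [hχdef]
          simp only [if_neg hh.2, if_pos hvjS]
          ring
        · rw [if_neg hti, if_neg htj]
          by_cases ha : v t ∈ S <;> by_cases hb : v (t+1) ∈ S
          · rw [hχdef]; simp only [if_pos ha, if_pos hb]; ring
          · exfalso
            have hcutT : s(v t, v (t+1)) ∈ cut G S :=
              ⟨gc_edgeSet h₁ h₂ gc htk', v t, v (t+1), rfl, ha, hb⟩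
            by_cases hp : t % 2 = 0
            · by_cases hpi : tt i % 2 = 0
              · have := htight1 S hSL _ _ hcutT (hout i hi hviS).1
                  (gc_edge₁ gc htk' hp).1 (gc_edge₁ gc (httk i hi) hpi).1
                exact hti (hEinj _ _ htk' (httk i hi) this)
              · have hpj : tt j % 2 = 0 := by omega
                have := htight1 S hSL _ _ hcutT (hout j hj hvjS).1
                  (gc_edge₁ gc htk' hp).1 (gc_edge₁ gc (httk j hj) hpj).1
                exact htj (hEinj _ _ htk' (httk j hj) this)
            · by_cases hpi : tt i % 2 = 1
              · have := htight2 S hSL _ _ hcutT (hout i hi hviS).1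
                  (gc_edge₂ gc htk' (by omega)).1 (gc_edge₂ gc (httk i hi) hpi).1
                exact hti (hEinj _ _ htk' (httk i hi) this)
              · have hpj : tt j % 2 = 1 := by omega
                have := htight2 S hSL _ _ hcutT (hout j hj hvjS).1
                  (gc_edge₂ gc htk' (by omega)).1 (gc_edge₂ gc (httk j hj) hpj).1
                exact htj (hEinj _ _ htk' (httk j hj) this)
          · exfalso
            have hcutT : s(v t, v (t+1)) ∈ cut G S :=
              ⟨gc_edgeSet h₁ h₂ gc htk', v (t+1), v t, Sym2.eq_swap, hb, ha⟩
            by_cases hp : t % 2 = 0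
            · by_cases hpi : tt i % 2 = 0
              · have := htight1 S hSL _ _ hcutT (hout i hi hviS).1
                  (gc_edge₁ gc htk' hp).1 (gc_edge₁ gc (httk i hi) hpi).1
                exact hti (hEinj _ _ htk' (httk i hi) this)
              · have hpj : tt j % 2 = 0 := by omega
                have := htight1 S hSL _ _ hcutT (hout j hj hvjS).1
                  (gc_edge₁ gc htk' hp).1 (gc_edge₁ gc (httk j hj) hpj).1
                exact htj (hEinj _ _ htk' (httk j hj) this)
            · by_cases hpi : tt i % 2 = 1
              · have := htight2 S hSL _ _ hcutT (hout i hi hviS).1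
                  (gc_edge₂ gc htk' (by omega)).1 (gc_edge₂ gc (httk i hi) hpi).1
                exact hti (hEinj _ _ htk' (httk i hi) this)
              · have hpj : tt j % 2 = 1 := by omega
                have := htight2 S hSL _ _ hcutT (hout j hj hvjS).1
                  (gc_edge₂ gc htk' (by omega)).1 (gc_edge₂ gc (httk j hj) hpj).1
                exact htj (hEinj _ _ htk' (httk j hj) this)
          · rw [hχdef]; simp only [if_neg ha, if_neg hb]; ring
    have hsum2 : (∑ t ∈ Finset.range k, (χ (t+1) - χ t)) = -2 := by
      rw [Finset.sum_congr rfl hterm, Finset.sum_add_distrib]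
      have e1 : (∑ t ∈ Finset.range k, if t = tt i then (-1:ℤ) else 0) = -1 :=
        (Finset.sum_eq_single_of_mem (tt i) (Finset.mem_range.mpr (httk i hi))
          (fun b _ hb => if_neg hb)).trans (if_pos rfl)
      have e2 : (∑ t ∈ Finset.range k, if t = tt j then (-1:ℤ) else 0) = -1 :=
        (Finset.sum_eq_single_of_mem (tt j) (Finset.mem_range.mpr (httk j hj))
          (fun b _ hb => if_neg hb)).trans (if_pos rfl)
      rw [e1, e2]
      ring
    rw [htel] at hsum2
    norm_num at hsum2
  -- disjoint family
  set A : ℕ → Finset (Fin n) := fun i =>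
    if h : ∃ S ∈ contrVerts L lam, v (tt i) ∈ S then h.choose else {v (tt i)} with hAdef
  have hAspec : ∀ i (h : ∃ S ∈ contrVerts L lam, v (tt i) ∈ S),
      A i ∈ contrVerts L lam ∧ v (tt i) ∈ A i := by
    intro i h
    rw [hAdef]
    simp only [dif_pos h]
    exact h.choose_spec
  have hAneg : ∀ i, (¬ ∃ S ∈ contrVerts L lam, v (tt i) ∈ S) → A i = {v (tt i)} := by
    intro i h
    rw [hAdef]
    simp only [dif_neg h]
  have hAcard : ∀ i, i < m → classWeight L lam (v (tt i)) = (A i).card := by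
    intro i hi
    by_cases hex : ∃ S ∈ contrVerts L lam, v (tt i) ∈ S
    · obtain ⟨hcv, hmem⟩ := hAspec i hex
      have hodd : Odd (A i).card := (hLsub hcv.1).1
      exact classWeight_of_mem hLam hcv hodd.pos hmem
    · push_neg at hex
      rw [classWeight_of_notMem hex, hAneg i (by push_neg; exact hex), Finset.card_singleton]
  have hdisj : ∀ i j, i < m → j < m → i ≠ j → Disjoint (A i) (A j) := by
    intro i j hi hj hij
    rw [Finset.disjoint_left]
    intro x hxi hxj
    by_cases hei : ∃ S ∈ contrVerts L lam, v (tt i) ∈ S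
    · obtain ⟨hcvi, hmemi⟩ := hAspec i hei
      by_cases hej : ∃ S ∈ contrVerts L lam, v (tt j) ∈ S
      · obtain ⟨hcvj, hmemj⟩ := hAspec j hej
        have heq : A i = A j := cv_disjoint hLam hcvi hcvj hxi hxj
        exact hij (houtuniq (A i) hcvi i j hi hj hmemi (heq ▸ hmemj))
      · rw [hAneg j hej, Finset.mem_singleton] at hxj
        subst hxj
        exact hej ⟨A i, hcvi, hxi⟩
    · rw [hAneg i hei, Finset.mem_singleton] at hxi
      subst hxi
      by_cases hej : ∃ S ∈ contrVerts L lam, v (tt j) ∈ S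
      · obtain ⟨hcvj, hmemj⟩ := hAspec j hej
        exact hei ⟨A j, hcvj, hxj⟩
      · rw [hAneg j hej, Finset.mem_singleton] at hxj
        have htine : tt i ≠ tt j := by
          intro h
          rcases lt_trichotomy i j with hc | hc | hc
          · have := (htlt i j hi hj).mp hc; omega
          · exact hij hc
          · have := (htlt j i hj hi).mp hc; omega
        rcases lt_trichotomy (tt i) (tt j) with hc | hc | hc
        · exact hvd _ _ hc (httk j hj) hxj
        · exact htine hc
        · exact hvd _ _ hc (httk i hi) hxj.symm
  have hweight : circuitWeight L lam m CC ≤ lam := by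
    rw [circuitWeight]
    have hcw : (∑ i ∈ Finset.range m, classWeight L lam (CC i).1) =
        ∑ i ∈ Finset.range m, (A i).card := by
      apply Finset.sum_congr rfl
      intro i hi
      exact hAcard i (Finset.mem_range.mp hi)
    rw [hcw]
    exact le_trans (sum_card_le hdisj) hn
  exact hgood.2.2 m CC hcirc hweight


lemma key_eq {F : Set (Sym2 (Fin n) → ℝ)} {L : Set (Finset (Fin n))} {lam : ℕ}
    (hn : n ≤ lam) (hF : IsFace G F) (hgood : LambdaGood G F L lam)
    {M₁ M₂ : Set (Sym2 (Fin n))}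
    (h₁ : IsPerfectMatching G M₁) (h₂ : IsPerfectMatching G M₂)
    (hM₁F : indic M₁ ∈ F) (hM₂F : indic M₂ ∈ F) : M₁ = M₂ := by
  classical
  by_contra hne
  have hLam : Laminar L := hgood.1.2.1
  have hex : ∃ e, (e ∈ M₁ ∧ e ∉ M₂) ∨ (e ∈ M₂ ∧ e ∉ M₁) := by
    by_contra h
    push_neg at h
    apply hne
    ext e
    have := h e
    tauto
  have main : ∀ (A B : Set (Sym2 (Fin n))), IsPerfectMatching G A →
      IsPerfectMatching G B → indic A ∈ F → indic B ∈ F →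
      ∀ e, e ∈ A → e ∉ B → False := by
    intro A B hA hB hAF hBF e
    induction e using Sym2.inductionOn with
    | hf a b =>
      intro heA heB
      obtain ⟨kk, vv, gcyc, hv0⟩ := exists_goodCycle hA hB heA heB
      by_cases hall : ∀ t, t < kk → InsideCV L lam (s(vv t, vv (t+1)))
      · obtain ⟨S, hS, hSall⟩ := all_inside_same hLam (by have := gcyc.1; omega) hall
        exact caseA hF hgood hA hB hAF hBF gcyc hS hSall
      · push_neg at hall
        obtain ⟨t₀, ht₀, hnin⟩ := hall
        by_cases hp : t₀ % 2 = 0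
        · have hedge := gc_edge₁ gcyc ht₀ hp
          obtain ⟨k', v', gcyc', hv0'⟩ := exists_goodCycle hA hB hedge.1 hedge.2
          have hk'0 : 0 < k' := by have := gcyc'.1; omega
          have hfe : s(v' 0, v' (0+1)) = s(vv t₀, vv (t₀+1)) := by
            obtain ⟨g, -, hg⟩ := hA.2 (vv t₀)
            rw [hg _ ⟨(gc_edge₁ gcyc' hk'0 (by norm_num)).1, by rw [hv0']; simp⟩,
                hg _ ⟨hedge.1, by simp⟩]
          exact caseB hn hgood hA hB hAF hBF gcyc' (by rw [hfe]; exact hnin)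
        · have hedge := gc_edge₂ gcyc ht₀ (by omega)
          obtain ⟨k', v', gcyc', hv0'⟩ := exists_goodCycle hB hA hedge.1 hedge.2
          have hk'0 : 0 < k' := by have := gcyc'.1; omega
          have hfe : s(v' 0, v' (0+1)) = s(vv t₀, vv (t₀+1)) := by
            obtain ⟨g, -, hg⟩ := hB.2 (vv t₀)
            rw [hg _ ⟨(gc_edge₁ gcyc' hk'0 (by norm_num)).1, by rw [hv0']; simp⟩,
                hg _ ⟨hedge.1, by simp⟩]
          exact caseB hn hgood hB hA hBF hAF gcyc' (by rw [hfe]; exact hnin)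
  obtain ⟨e, he⟩ := hex
  rcases he with ⟨ha, hb⟩ | ⟨ha, hb⟩
  · exact main M₁ M₂ h₁ h₂ hM₁F hM₂F e ha hb
  · exact main M₂ M₁ h₂ h₁ hM₂F hM₁F e ha hb

end Aux

/-- **Lemma (finalization).**
If `(F, L)` is a `λ`-good face-laminar pair for some `λ` with `n ≤ λ ≤ 2n`, then the
face `F` consists of a single point: `F = {1_M}` for exactly one perfect matching `M`
(the indicator vector of which is the unique point of `F`). -/
theorem lambda_good_final (n : ℕ) (G : SimpleGraph (Fin n))
    (F : Set (Sym2 (Fin n) → ℝ)) (L : Set (Finset (Fin n))) (lam : ℕ)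
    (h1 : n ≤ lam) (h2 : lam ≤ 2 * n) (hF : IsFace G F)
    (hgood : LambdaGood G F L lam) :
    ∃ M : Set (Sym2 (Fin n)), IsPerfectMatching G M ∧ F = {indic M} := by
  classical
  obtain ⟨x₀, hx₀⟩ := hF.1
  obtain ⟨ι, t, c, z, hc0, hc1, hzF, hxe⟩ := face_decomp hF hx₀
  have htne : t.Nonempty := by
    by_contra h
    rw [Finset.not_nonempty_iff_eq_empty] at h
    rw [h, Finset.sum_empty] at hc1
    norm_num at hc1
  obtain ⟨i₀, hi₀⟩ := htne
  obtain ⟨⟨M₀, hM₀, hz₀⟩, hz₀F⟩ := hzF i₀ hi₀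
  refine ⟨M₀, hM₀, ?_⟩
  have hM₀F : indic M₀ ∈ F := hz₀ ▸ hz₀F
  apply Set.eq_of_subset_of_subset
  · intro x hx
    obtain ⟨ι', t', c', z', hc0', hc1', hzF', hxe'⟩ := face_decomp hF hx
    have hzeq : ∀ i ∈ t', z' i = indic M₀ := by
      intro i hi
      obtain ⟨⟨M, hM, hz⟩, hzF''⟩ := hzF' i hi
      have hMM : M = M₀ := key_eq h1 hF hgood hM hM₀ (hz ▸ hzF'') hM₀F
      rw [hz, hMM]
    have hxeq : ∀ e, x e = indic M₀ e := by
      intro e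
      rw [hxe' e]
      rw [Finset.sum_congr rfl (fun i hi => by rw [hzeq i hi])]
      rw [← Finset.sum_mul, hc1', one_mul]
    exact Set.mem_singleton_iff.mpr (funext hxeq)
  · intro x hx
    rw [Set.mem_singleton_iff] at hx
    rw [hx]
    exact hM₀F
end PMQuasiNC
end
end

section
/- Let F be a face of the perfect matching polytope with E = supp(F), and let S, T ∈ tight(F) be crossing sets. If |S∩T| is odd, then S∩T ∈ tight(F), S∪T ∈ tight(F), and 1_{δ(S)} + 1_{δ(T)} = 1_{δ(S∩T)} + 1_{δ(S∪T)}; otherwise (|S∩T| even), S\T ∈ tight(F), T\S ∈ tight(F), and 1_{δ(S)} + 1_{δ(T)} = 1_{δ(S\T)} + 1_{δ(T\S)}. -/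
/- Formalization framework for "The Matching Problem in General Graphs is in Quasi-NC"
(Svensson–Tarnawski).  The graph has vertex set `Fin n`; vectors indexed by edges are
modelled as functions `Sym2 (Fin n) → ℝ` (resp. `ℤ`) supported on the edge set. -/

open scoped BigOperators
open scoped Classical

noncomputable section

namespace PMQuasiNC

/-! ### Auxiliary lemmas for the uncrossing lemma -/

section UncrossAux

variable {n : ℕ}

lemma exists_pair_iff (P Q : Fin n → Prop) (a b : Fin n) :
    (∃ u v, s(a, b) = s(u, v) ∧ P u ∧ Q v) ↔ (P a ∧ Q b) ∨ (P b ∧ Q a) := by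
  constructor
  · rintro ⟨u, v, h, hu, hv⟩
    rw [Sym2.eq_iff] at h
    rcases h with ⟨rfl, rfl⟩ | ⟨rfl, rfl⟩
    · exact Or.inl ⟨hu, hv⟩
    · exact Or.inr ⟨hu, hv⟩
  · rintro (⟨ha, hb⟩ | ⟨hb, ha⟩)
    · exact ⟨a, b, rfl, ha, hb⟩
    · exact ⟨b, a, Sym2.eq_swap, hb, ha⟩

lemma cutInd_pair (G : SimpleGraph (Fin n)) (U : Finset (Fin n)) (a b : Fin n) :
    cutInd G U s(a, b)
      = if s(a, b) ∈ G.edgeSet ∧ ((a ∈ U ∧ b ∉ U) ∨ (b ∈ U ∧ a ∉ U)) then 1 else 0 := by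
  have h : s(a, b) ∈ cut G U ↔
      s(a, b) ∈ G.edgeSet ∧ ((a ∈ U ∧ b ∉ U) ∨ (b ∈ U ∧ a ∉ U)) := by
    unfold cut
    rw [Set.mem_setOf_eq, exists_pair_iff (fun u => u ∈ U) (fun v => v ∉ U) a b]
  unfold cutInd
  rw [if_congr h rfl rfl]

/-- Indicator of the edges of `G` between the (disjoint) vertex sets `A` and `B`. -/
def crossInd (G : SimpleGraph (Fin n)) (A B : Finset (Fin n)) : Sym2 (Fin n) → ℝ :=
  fun e => if e ∈ G.edgeSet ∧ ∃ u v, e = s(u, v) ∧ u ∈ A ∧ v ∈ B then 1 else 0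

lemma crossInd_pair (G : SimpleGraph (Fin n)) (A B : Finset (Fin n)) (a b : Fin n) :
    crossInd G A B s(a, b)
      = if s(a, b) ∈ G.edgeSet ∧ ((a ∈ A ∧ b ∈ B) ∨ (b ∈ A ∧ a ∈ B)) then 1 else 0 := by
  unfold crossInd
  rw [if_congr (and_congr Iff.rfl (exists_pair_iff (fun u => u ∈ A) (fun v => v ∈ B) a b))
    rfl rfl]

lemma key_odd (G : SimpleGraph (Fin n)) (S T : Finset (Fin n)) (e : Sym2 (Fin n)) :
    cutInd G S e + cutInd G T e
      = cutInd G (S ∩ T) e + cutInd G (S ∪ T) e + 2 * crossInd G (S \ T) (T \ S) e := by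
  induction e using Sym2.ind with
  | _ a b =>
    by_cases he : s(a, b) ∈ G.edgeSet
    · by_cases haS : a ∈ S <;> by_cases haT : a ∈ T <;> by_cases hbS : b ∈ S <;>
        by_cases hbT : b ∈ T <;>
        simp [cutInd_pair, crossInd_pair, he, haS, haT, hbS, hbT, Finset.mem_inter,
          Finset.mem_union, Finset.mem_sdiff] <;> norm_num
    · simp [cutInd_pair, crossInd_pair, he]

lemma key_even (G : SimpleGraph (Fin n)) (S T : Finset (Fin n)) (e : Sym2 (Fin n)) :
    cutInd G S e + cutInd G T e
      = cutInd G (S \ T) e + cutInd G (T \ S) e + 2 * crossInd G (S ∩ T) (S ∪ T)ᶜ e := by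
  induction e using Sym2.ind with
  | _ a b =>
    by_cases he : s(a, b) ∈ G.edgeSet
    · by_cases haS : a ∈ S <;> by_cases haT : a ∈ T <;> by_cases hbS : b ∈ S <;>
        by_cases hbT : b ∈ T <;>
        simp [cutInd_pair, crossInd_pair, he, haS, haT, hbS, hbT, Finset.mem_inter,
          Finset.mem_union, Finset.mem_sdiff, Finset.mem_compl] <;> norm_num
    · simp [cutInd_pair, crossInd_pair, he]

lemma pm_nonneg {G : SimpleGraph (Fin n)} {x : Sym2 (Fin n) → ℝ} (hx : x ∈ PMpoly G)
    (e : Sym2 (Fin n)) : 0 ≤ x e := by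
  have h : PMpoly G ⊆ {x : Sym2 (Fin n) → ℝ | 0 ≤ x e} := by
    apply convexHull_min
    · rintro y ⟨M, hM, rfl⟩
      simp only [Set.mem_setOf_eq, indic]
      split <;> norm_num
    · intro y hy z hz a b ha hb hab
      simp only [Set.mem_setOf_eq, Pi.add_apply, Pi.smul_apply, smul_eq_mul] at *
      exact add_nonneg (mul_nonneg ha hy) (mul_nonneg hb hz)
  exact h hx

lemma pm_zero_off {G : SimpleGraph (Fin n)} {x : Sym2 (Fin n) → ℝ} (hx : x ∈ PMpoly G)
    {e : Sym2 (Fin n)} (he : e ∉ G.edgeSet) : x e = 0 := by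
  have h : PMpoly G ⊆ {x : Sym2 (Fin n) → ℝ | x e = 0} := by
    apply convexHull_min
    · rintro y ⟨M, hM, rfl⟩
      simp only [Set.mem_setOf_eq, indic, if_neg (fun hh => he (hM.1 hh))]
    · intro y hy z hz a b ha hb hab
      simp only [Set.mem_setOf_eq, Pi.add_apply, Pi.smul_apply, smul_eq_mul] at *
      rw [hy, hz]; ring
  exact h hx

lemma dotR_smul_add (w y z : Sym2 (Fin n) → ℝ) (a b : ℝ) :
    dotR w (a • y + b • z) = a * dotR w y + b * dotR w z := by
  simp only [dotR, Finset.mul_sum, ← Finset.sum_add_distrib]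
  apply Finset.sum_congr rfl
  intro e _
  simp only [Pi.add_apply, Pi.smul_apply, smul_eq_mul]
  ring

lemma matching_cut_exists {G : SimpleGraph (Fin n)} {M : Set (Sym2 (Fin n))}
    (hM : IsPerfectMatching G M) {U : Finset (Fin n)} (hU : Odd U.card) :
    ∃ e, e ∈ cut G U ∧ e ∈ M := by
  by_contra hcon
  push_neg at hcon
  have hed : ∀ v : Fin n, ∃ e, (e ∈ M ∧ v ∈ e) ∧ ∀ y, (y ∈ M ∧ v ∈ y) → y = e :=
    fun v => (hM.2 v)
  classical
  set ed : Fin n → Sym2 (Fin n) := fun v => (hed v).choose with hed_def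
  have hedM : ∀ v, ed v ∈ M := fun v => (hed v).choose_spec.1.1
  have hedv : ∀ v, v ∈ ed v := fun v => (hed v).choose_spec.1.2
  have heduniq : ∀ v y, y ∈ M ∧ v ∈ y → y = ed v := fun v => (hed v).choose_spec.2
  set g : ∀ a ∈ U, Fin n := fun v _ => Sym2.Mem.other (hedv v) with hg_def
  have hspec : ∀ v, s(v, Sym2.Mem.other (hedv v)) = ed v := fun v => Sym2.other_spec _
  have hne : ∀ v, Sym2.Mem.other (hedv v) ≠ v := by
    intro v h
    have hdiag : (ed v).IsDiag := by
      rw [← hspec v, h]; exact Sym2.mk_isDiag_iff.2 rfl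
    exact G.not_isDiag_of_mem_edgeSet (hM.1 (hedM v)) hdiag
  have hmem : ∀ a (ha : a ∈ U), g a ha ∈ U := by
    intro a ha
    by_contra hnot
    refine hcon (ed a) ?_ (hedM a)
    exact ⟨hM.1 (hedM a), a, Sym2.Mem.other (hedv a), (hspec a).symm, ha, hnot⟩
  have hinv : ∀ a (ha : a ∈ U), g (g a ha) (hmem a ha) = a := by
    intro a ha
    have hsame : ed a = ed (g a ha) := by
      apply heduniq
      refine ⟨hedM a, ?_⟩
      rw [← hspec a]
      exact Sym2.mem_mk_right _ _
    have h2 : s(g a ha, Sym2.Mem.other (hedv (g a ha))) = s(a, g a ha) := by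
      rw [hspec (g a ha), ← hsame, ← hspec a]
    rw [Sym2.eq_iff] at h2
    rcases h2 with ⟨h1, h2⟩ | ⟨h1, h2⟩
    · exact h2.trans h1
    · exact h2
  have hsum : ∑ v ∈ U, (1 : ZMod 2) = 0 := by
    refine Finset.sum_involution g (fun a ha => by decide) (fun a ha h => ?_) hmem hinv
    intro hgeq
    exact hne a hgeq
  rw [Finset.sum_const, nsmul_eq_mul, mul_one] at hsum
  rw [ZMod.natCast_eq_zero_iff] at hsum
  rw [Nat.odd_iff] at hU
  omega

lemma pm_oddcut {G : SimpleGraph (Fin n)} {x : Sym2 (Fin n) → ℝ} (hx : x ∈ PMpoly G)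
    {U : Finset (Fin n)} (hU : Odd U.card) : 1 ≤ dotR (cutInd G U) x := by
  have h : PMpoly G ⊆ {x : Sym2 (Fin n) → ℝ | 1 ≤ dotR (cutInd G U) x} := by
    apply convexHull_min
    · rintro y ⟨M, hM, rfl⟩
      obtain ⟨e₀, he₀cut, he₀M⟩ := matching_cut_exists hM hU
      simp only [Set.mem_setOf_eq]
      have key : (1 : ℝ) = cutInd G U e₀ * indic M e₀ := by
        simp [cutInd, indic, he₀cut, he₀M]
      rw [key]
      unfold dotR
      apply Finset.single_le_sum (f := fun e => cutInd G U e * indic M e)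
      · intro e _
        apply mul_nonneg <;> · simp only [cutInd, indic]; split <;> norm_num
      · exact Finset.mem_univ e₀
    · intro y hy z hz a b ha hb hab
      simp only [Set.mem_setOf_eq] at *
      rw [dotR_smul_add]
      nlinarith
  exact h hx

lemma uncross_aux {G : SimpleGraph (Fin n)} {F : Set (Sym2 (Fin n) → ℝ)} (hF : IsFace G F)
    (hsupp : G.edgeSet = faceSupp F) {S T : Finset (Fin n)} (P Q A B : Finset (Fin n))
    (hS : S ∈ tightSets G F) (hT : T ∈ tightSets G F)
    (hP : Odd P.card) (hQ : Odd Q.card)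
    (hid : ∀ e, cutInd G S e + cutInd G T e
      = cutInd G P e + cutInd G Q e + 2 * crossInd G A B e) :
    P ∈ tightSets G F ∧ Q ∈ tightSets G F ∧
      cutInd G S + cutInd G T = cutInd G P + cutInd G Q := by
  obtain ⟨hne, w, hw⟩ := hF
  have hFsub : F ⊆ PMpoly G := by rw [hw]; exact fun x hx => hx.1
  have main : ∀ x ∈ F, dotR (cutInd G P) x = 1 ∧ dotR (cutInd G Q) x = 1 ∧
      dotR (crossInd G A B) x = 0 := by
    intro x hxF
    have hxPM := hFsub hxF
    have h1 : dotR (cutInd G S) x = 1 := hS.2 x hxF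
    have h2 : dotR (cutInd G T) x = 1 := hT.2 x hxF
    have hP1 : 1 ≤ dotR (cutInd G P) x := pm_oddcut hxPM hP
    have hQ1 : 1 ≤ dotR (cutInd G Q) x := pm_oddcut hxPM hQ
    have hcr : 0 ≤ dotR (crossInd G A B) x := by
      apply Finset.sum_nonneg
      intro e _
      apply mul_nonneg
      · simp only [crossInd]; split <;> norm_num
      · exact pm_nonneg hxPM e
    have hsum : dotR (cutInd G S) x + dotR (cutInd G T) x
        = dotR (cutInd G P) x + dotR (cutInd G Q) x + 2 * dotR (crossInd G A B) x := by
      simp only [dotR, Finset.mul_sum, ← Finset.sum_add_distrib]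
      apply Finset.sum_congr rfl
      intro e _
      have h := hid e
      linear_combination x e * h
    exact ⟨by linarith, by linarith, by linarith⟩
  have hcross0 : ∀ e, crossInd G A B e = 0 := by
    intro e
    by_contra hne0
    have hif : e ∈ G.edgeSet ∧ ∃ u v, e = s(u, v) ∧ u ∈ A ∧ v ∈ B := by
      by_contra hc
      exact hne0 (if_neg hc)
    have hval : crossInd G A B e = 1 := if_pos hif
    have : e ∈ faceSupp F := hsupp ▸ hif.1
    obtain ⟨x, hxF, hxe⟩ := this
    have h0 := (main x hxF).2.2
    have hterm : crossInd G A B e * x e = 0 := by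
      have := Finset.sum_eq_zero_iff_of_nonneg (f := fun e => crossInd G A B e * x e)
        (s := Finset.univ) (by
          intro e' _
          apply mul_nonneg
          · simp only [crossInd]; split <;> norm_num
          · exact pm_nonneg (hFsub hxF) e')
      exact (this.1 h0) e (Finset.mem_univ e)
    rw [hval, one_mul] at hterm
    linarith
  refine ⟨⟨hP, fun x hx => (main x hx).1⟩, ⟨hQ, fun x hx => (main x hx).2.1⟩, ?_⟩
  funext e
  have h := hid e
  rw [hcross0 e] at h
  simp only [Pi.add_apply]
  linarith

end UncrossAux

/-- **Lemma (uncrossing).**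
Let `F` be a face of the perfect matching polytope with `E = supp(F)`, and let
`S, T ∈ tight(F)` be crossing sets.  If `|S ∩ T|` is odd, then
`S ∩ T, S ∪ T ∈ tight(F)` and `1_{δ(S)} + 1_{δ(T)} = 1_{δ(S∩T)} + 1_{δ(S∪T)}`;
otherwise `S \ T, T \ S ∈ tight(F)` and
`1_{δ(S)} + 1_{δ(T)} = 1_{δ(S\T)} + 1_{δ(T\S)}`. -/
theorem uncrossing (n : ℕ) (G : SimpleGraph (Fin n))
    (F : Set (Sym2 (Fin n) → ℝ)) (hF : IsFace G F)
    (hsupp : G.edgeSet = faceSupp F)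
    (S T : Finset (Fin n)) (hS : S ∈ tightSets G F) (hT : T ∈ tightSets G F)
    (hcross : Crossing S T) :
    (Odd (S ∩ T).card →
      S ∩ T ∈ tightSets G F ∧ S ∪ T ∈ tightSets G F ∧
        cutInd G S + cutInd G T = cutInd G (S ∩ T) + cutInd G (S ∪ T)) ∧
    (¬ Odd (S ∩ T).card →
      S \ T ∈ tightSets G F ∧ T \ S ∈ tightSets G F ∧
        cutInd G S + cutInd G T = cutInd G (S \ T) + cutInd G (T \ S)) := by
  constructor
  · intro hodd
    have hcard : Odd (S ∪ T).card := by
      have h := Finset.card_union_add_card_inter S T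
      have h1 := hS.1
      have h2 := hT.1
      rw [Nat.odd_iff] at h1 h2 hodd ⊢
      omega
    exact uncross_aux hF hsupp (S ∩ T) (S ∪ T) (S \ T) (T \ S) hS hT hodd hcard (key_odd G S T)
  · intro heven
    have h1 := hS.1
    have h2 := hT.1
    have hc1 := Finset.card_sdiff_add_card_inter S T
    have hc2 := Finset.card_sdiff_add_card_inter T S
    rw [Finset.inter_comm T S] at hc2
    rw [Nat.odd_iff] at h1 h2 heven
    have hodd1 : Odd (S \ T).card := by rw [Nat.odd_iff]; omega
    have hodd2 : Odd (T \ S).card := by rw [Nat.odd_iff]; omega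
    exact uncross_aux hF hsupp (S \ T) (T \ S) (S ∩ T) (S ∪ T)ᶜ hS hT hodd1 hodd2
      (key_even G S T)
end PMQuasiNC
end
end
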